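/- arXiv:math/0409397 — 4 statements merged into one kernel-verified Lean document; each statement's English description precedes it below -/
import Mathlib

section
/- Schwarz Lemma (ultrametric): Let L be a complete algebraically closed non-archimedean field, and let φ ∈ L[ζ] be a polynomial mapping a ball B₀ of radius r₀ into a ball B₁ of radius r₁. Then for all ζ₁, ζ₂ ∈ B₀ one has |φ(ζ₁) − φ(ζ₂)| ≤ (r₁/r₀)·|ζ₁ − ζ₂|, and |φ′(ζ₁)| ≤ r₁/r₀ for all ζ₁ ∈ B₀. -/
open Polynomial Metric Set

/-- Gauss norm bound: if `‖p.eval z‖ ≤ M` on the closed ball of radius `r`, then each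
coefficient satisfies `‖p.coeff j‖ * r ^ j ≤ M`. -/
lemma coeff_bound_of_norm_eval_le {L : Type*} [NormedField L] [IsUltrametricDist L]
    (hdense : ∀ r : ℝ, 0 < r → ∀ ε : ℝ, 0 < ε → ∃ x : L, x ≠ 0 ∧ |‖x‖ - r| < ε)
    (p : Polynomial L) (r M : ℝ) (hr : 0 < r)
    (hb : ∀ z : L, ‖z‖ ≤ r → ‖p.eval z‖ ≤ M) (j : ℕ) :
    ‖p.coeff j‖ * r ^ j ≤ M := by
  classical
  have hM0 : 0 ≤ M := le_trans (norm_nonneg _) (hb 0 (by simpa using hr.le))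
  by_cases hcj : p.coeff j = 0
  · simpa [hcj] using hM0
  by_contra hlt
  push_neg at hlt
  -- continuity: on a small ball around r the monomial exceeds M
  have hcont : ContinuousAt (fun t : ℝ => ‖p.coeff j‖ * t ^ j) r := by fun_prop
  obtain ⟨ε, hε, hball⟩ := Metric.mem_nhds_iff.mp (hcont (Ioi_mem_nhds hlt))
  set n := p.natDegree with hn
  -- crossing radii of pairs of monomials
  set cr : ℕ → ℕ → ℝ := fun i k => (‖p.coeff i‖ / ‖p.coeff k‖) ^ ((1:ℝ) / ((k:ℝ) - (i:ℝ)))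
    with hcrdef
  have hcr : ∀ i k : ℕ, i < k → p.coeff i ≠ 0 → p.coeff k ≠ 0 →
      ∀ s : ℝ, 0 < s → ‖p.coeff i‖ * s ^ i = ‖p.coeff k‖ * s ^ k → s = cr i k := by
    intro i k hik hi hk s hs heq
    have hknorm : (0:ℝ) < ‖p.coeff k‖ := norm_pos_iff.mpr hk
    have hne : ((k - i : ℕ) : ℝ) ≠ 0 := Nat.cast_ne_zero.mpr (by omega)
    have h2 : s ^ (k - i) = ‖p.coeff i‖ / ‖p.coeff k‖ := by
      rw [eq_div_iff hknorm.ne']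
      have hpow : s ^ (k - i) * s ^ i = s ^ k := by
        rw [← pow_add]; congr 1; omega
      have h3 : ‖p.coeff i‖ * s ^ i = (s ^ (k - i) * ‖p.coeff k‖) * s ^ i := by
        rw [heq, mul_comm (s ^ (k - i)) ‖p.coeff k‖, mul_assoc, hpow]
      exact (mul_right_cancel₀ (pow_ne_zero i hs.ne') h3).symm
    have : cr i k = s := by
      show (‖p.coeff i‖ / ‖p.coeff k‖) ^ ((1:ℝ) / ((k:ℝ) - (i:ℝ))) = s
      rw [← h2, show ((k:ℝ) - (i:ℝ)) = ((k - i : ℕ) : ℝ) from by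
            rw [Nat.cast_sub hik.le],
          ← Real.rpow_natCast s (k - i), ← Real.rpow_mul hs.le, mul_one_div,
          div_self hne, Real.rpow_one]
    exact this.symm
  -- a finite set of "bad" radii; pick α below r avoiding all of them
  set F : Finset ℝ :=
    (insert (max (r - ε) (r / 2))
      (((Finset.range (n+1)) ×ˢ (Finset.range (n+1))).image fun ik => cr ik.1 ik.2)).filter
      (· < r) with hF
  have hmaxlt : max (r - ε) (r / 2) < r := max_lt (by linarith) (by linarith)
  have hFne : F.Nonempty :=
    ⟨max (r - ε) (r / 2), Finset.mem_filter.mpr ⟨Finset.mem_insert_self _ _, hmaxlt⟩⟩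
  set α := F.max' hFne with hα
  have hαr : α < r := (Finset.mem_filter.mp (F.max'_mem hFne)).2
  have hαge : max (r - ε) (r / 2) ≤ α :=
    F.le_max' _ (Finset.mem_filter.mpr ⟨Finset.mem_insert_self _ _, hmaxlt⟩)
  have hα2 : r / 2 ≤ α := le_trans (le_max_right _ _) hαge
  have hαε : r - ε ≤ α := le_trans (le_max_left _ _) hαge
  obtain ⟨x, hx0, hxd⟩ := hdense ((α + r) / 2) (by linarith) ((r - α) / 2) (by linarith)
  set s := ‖x‖ with hs
  have hs_pos : 0 < s := norm_pos_iff.mpr hx0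
  rw [abs_lt] at hxd
  have hsα : α < s := by linarith [hxd.1]
  have hsr : s < r := by linarith [hxd.2]
  -- no ties among monomials at radius s
  have key2 : ∀ i k : ℕ, i < k → p.coeff i ≠ 0 → p.coeff k ≠ 0 →
      ‖p.coeff i‖ * s ^ i = ‖p.coeff k‖ * s ^ k → False := by
    intro i k hik hi hk heq
    have hscr : s = cr i k := hcr i k hik hi hk s hs_pos heq
    have hiF : cr i k ∈ F := by
      refine Finset.mem_filter.mpr ⟨Finset.mem_insert_of_mem ?_,
        lt_of_eq_of_lt hscr.symm hsr⟩
      exact Finset.mem_image.mpr ⟨(i, k), Finset.mem_product.mpr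
        ⟨Finset.mem_range.mpr (by have := p.le_natDegree_of_ne_zero hi; omega),
         Finset.mem_range.mpr (by have := p.le_natDegree_of_ne_zero hk; omega)⟩, rfl⟩
    have hsle : s ≤ α := le_of_eq_of_le hscr (F.le_max' _ hiF)
    exact absurd hsα (not_lt.mpr hsle)
  have hnotie : ∀ i k : ℕ, p.coeff i ≠ 0 → p.coeff k ≠ 0 → i ≠ k →
      ‖p.coeff i‖ * s ^ i ≠ ‖p.coeff k‖ * s ^ k := by
    intro i k hi hk hik heq
    rcases lt_or_gt_of_ne hik with h | h
    · exact key2 i k h hi hk heq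
    · exact key2 k i h hk hi heq.symm
  -- pick the index with the strictly dominant monomial
  obtain ⟨m, hmmem, hmax⟩ := Finset.exists_max_image p.support
    (fun i => ‖p.coeff i‖ * s ^ i) ⟨j, Polynomial.mem_support_iff.mpr hcj⟩
  have hm0 : p.coeff m ≠ 0 := Polynomial.mem_support_iff.mp hmmem
  have hmn : m ≤ n := p.le_natDegree_of_ne_zero hm0
  have hmpos : 0 < ‖p.coeff m‖ * s ^ m :=
    mul_pos (norm_pos_iff.mpr hm0) (pow_pos hs_pos m)
  have hstrict : ∀ i : ℕ, i ≠ m → ‖p.coeff i‖ * s ^ i < ‖p.coeff m‖ * s ^ m := by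
    intro i hi
    by_cases h0 : p.coeff i = 0
    · simpa [h0] using hmpos
    · exact lt_of_le_of_ne (hmax i (Polynomial.mem_support_iff.mpr h0))
        (hnotie i m h0 hm0 hi)
  -- the dominant monomial determines the norm of the value
  have heval : p.eval x = p.coeff m * x ^ m +
      ∑ i ∈ (Finset.range (n+1)).erase m, p.coeff i * x ^ i := by
    rw [Polynomial.eval_eq_sum_range]
    exact (Finset.add_sum_erase _ _ (Finset.mem_range.mpr (by omega))).symm
  have hnorm_m : ‖p.coeff m * x ^ m‖ = ‖p.coeff m‖ * s ^ m := by
    rw [norm_mul, norm_pow]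
  have hrest : ‖∑ i ∈ (Finset.range (n+1)).erase m, p.coeff i * x ^ i‖ <
      ‖p.coeff m * x ^ m‖ := by
    rcases Finset.eq_empty_or_nonempty ((Finset.range (n+1)).erase m) with he | hne2
    · rw [he]; simpa [hnorm_m] using hmpos
    · refine lt_of_le_of_lt (hne2.norm_sum_le_sup'_norm _) ?_
      rw [hnorm_m]
      refine (Finset.sup'_lt_iff hne2).mpr fun i hi => ?_
      rw [norm_mul, norm_pow]
      exact hstrict i (Finset.ne_of_mem_erase hi)
  have hevalnorm : ‖p.eval x‖ = ‖p.coeff m‖ * s ^ m := by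
    rw [heval, IsUltrametricDist.norm_add_eq_max_of_norm_ne_norm hrest.ne', max_eq_left hrest.le, hnorm_m]
  have h1 : ‖p.coeff j‖ * s ^ j ≤ M := by
    have hjm : ‖p.coeff j‖ * s ^ j ≤ ‖p.coeff m‖ * s ^ m := by
      by_cases hjm : j = m
      · subst hjm; exact le_refl _
      · exact (hstrict j hjm).le
    calc ‖p.coeff j‖ * s ^ j ≤ ‖p.coeff m‖ * s ^ m := hjm
      _ = ‖p.eval x‖ := hevalnorm.symm
      _ ≤ M := hb x hsr.le
  have hsball : s ∈ Metric.ball r ε := by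
    rw [Metric.mem_ball, Real.dist_eq, abs_lt]
    constructor <;> linarith
  have h2 : M < ‖p.coeff j‖ * s ^ j := by simpa using hball hsball
  linarith

/-- **Schwarz Lemma (ultrametric).** If a polynomial maps the closed ball of radius `r₀`
into the closed ball of radius `r₁`, then it is `(r₁/r₀)`-Lipschitz there and its
derivative is bounded by `r₁/r₀`. -/
theorem schwarz_lemma {L : Type*} [NormedField L] [IsUltrametricDist L]
    [CompleteSpace L] [IsAlgClosed L]
    (hdense : ∀ r : ℝ, 0 < r → ∀ ε : ℝ, 0 < ε → ∃ x : L, x ≠ 0 ∧ |‖x‖ - r| < ε)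
    (φ : Polynomial L) (a₀ a₁ : L) (r₀ r₁ : ℝ) (hr₀ : 0 < r₀) (hr₁ : 0 < r₁)
    (hmap : ∀ z ∈ Metric.closedBall a₀ r₀, φ.eval z ∈ Metric.closedBall a₁ r₁) :
    (∀ ζ₁ ∈ Metric.closedBall a₀ r₀, ∀ ζ₂ ∈ Metric.closedBall a₀ r₀,
      ‖φ.eval ζ₁ - φ.eval ζ₂‖ ≤ (r₁ / r₀) * ‖ζ₁ - ζ₂‖) ∧
    (∀ ζ₁ ∈ Metric.closedBall a₀ r₀,
      ‖(Polynomial.derivative φ).eval ζ₁‖ ≤ r₁ / r₀) := by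
  -- coefficient bounds for the translated polynomial
  have main : ∀ ζ₁ ∈ Metric.closedBall a₀ r₀, ∀ k : ℕ,
      ‖((φ.comp (X + C ζ₁)) - C (φ.eval ζ₁)).coeff k‖ * r₀ ^ k ≤ r₁ := by
    intro ζ₁ hζ₁ k
    refine coeff_bound_of_norm_eval_le hdense _ r₀ r₁ hr₀ (fun z hz => ?_) k
    have hmem : z + ζ₁ ∈ Metric.closedBall a₀ r₀ := by
      rw [Metric.mem_closedBall] at *
      refine le_trans (IsUltrametricDist.dist_triangle_max _ ζ₁ _) (max_le ?_ hζ₁)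
      simpa [dist_eq_norm] using hz
    have h1 := Metric.mem_closedBall.mp (hmap _ hmem)
    have h2 := Metric.mem_closedBall.mp (hmap _ hζ₁)
    have hev : ((φ.comp (X + C ζ₁)) - C (φ.eval ζ₁)).eval z
        = φ.eval (z + ζ₁) - φ.eval ζ₁ := by
      simp [Polynomial.eval_comp]
    rw [hev]
    calc ‖φ.eval (z + ζ₁) - φ.eval ζ₁‖ = dist (φ.eval (z + ζ₁)) (φ.eval ζ₁) :=
          (dist_eq_norm _ _).symm
      _ ≤ max (dist (φ.eval (z + ζ₁)) a₁) (dist a₁ (φ.eval ζ₁)) :=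
          IsUltrametricDist.dist_triangle_max _ _ _
      _ ≤ r₁ := max_le h1 (by rwa [dist_comm])
  constructor
  · intro ζ₁ h₁ ζ₂ h₂
    set q := (φ.comp (X + C ζ₁)) - C (φ.eval ζ₁) with hq
    have hzr₀ : ‖ζ₂ - ζ₁‖ ≤ r₀ := by
      rw [← dist_eq_norm]
      refine le_trans (IsUltrametricDist.dist_triangle_max ζ₂ a₀ ζ₁) (max_le ?_ ?_)
      · exact Metric.mem_closedBall.mp h₂
      · rw [dist_comm]; exact Metric.mem_closedBall.mp h₁
    have hq0 : q.coeff 0 = 0 := by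
      rw [Polynomial.coeff_zero_eq_eval_zero]
      simp [hq, Polynomial.eval_comp]
    have ht0 : (0:ℝ) ≤ ‖ζ₂ - ζ₁‖ := norm_nonneg _
    have key : ‖q.eval (ζ₂ - ζ₁)‖ ≤ (r₁ / r₀) * ‖ζ₂ - ζ₁‖ := by
      rw [Polynomial.eval_eq_sum_range]
      refine IsUltrametricDist.norm_sum_le_of_forall_le_of_nonneg (by positivity)
        fun i _ => ?_
      rw [norm_mul, norm_pow]
      rcases Nat.eq_zero_or_pos i with h0 | h0
      · subst h0; simp [hq0]; positivity
      · have hc := main ζ₁ h₁ i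
        rw [← hq] at hc
        have e1 : ‖q.coeff i‖ * r₀ ^ (i - 1) ≤ r₁ / r₀ := by
          rw [le_div_iff₀ hr₀, mul_assoc, ← pow_succ, show i - 1 + 1 = i by omega]
          exact hc
        have e2 : ‖q.coeff i‖ * ‖ζ₂ - ζ₁‖ ^ (i - 1) ≤ ‖q.coeff i‖ * r₀ ^ (i - 1) :=
          mul_le_mul_of_nonneg_left (pow_le_pow_left₀ ht0 hzr₀ _) (norm_nonneg _)
        calc ‖q.coeff i‖ * ‖ζ₂ - ζ₁‖ ^ i
            = (‖q.coeff i‖ * ‖ζ₂ - ζ₁‖ ^ (i - 1)) * ‖ζ₂ - ζ₁‖ := by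
              rw [mul_assoc, ← pow_succ, show i - 1 + 1 = i by omega]
          _ ≤ (r₁ / r₀) * ‖ζ₂ - ζ₁‖ :=
              mul_le_mul_of_nonneg_right (e2.trans e1) ht0
    have hev2 : q.eval (ζ₂ - ζ₁) = φ.eval ζ₂ - φ.eval ζ₁ := by
      simp [hq, Polynomial.eval_comp]
    rw [hev2] at key
    rw [show ‖φ.eval ζ₁ - φ.eval ζ₂‖ = ‖φ.eval ζ₂ - φ.eval ζ₁‖ from norm_sub_rev _ _,
        show ‖ζ₁ - ζ₂‖ = ‖ζ₂ - ζ₁‖ from norm_sub_rev _ _]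
    exact key
  · intro ζ₁ h₁
    have hc1 := main ζ₁ h₁ 1
    have hd : ((φ.comp (X + C ζ₁)) - C (φ.eval ζ₁)).coeff 1
        = (Polynomial.derivative φ).eval ζ₁ := by
      have h1 : ((φ.comp (X + C ζ₁)) - C (φ.eval ζ₁)).coeff 1
          = (φ.comp (X + C ζ₁)).coeff 1 := by simp
      have h2 : (φ.comp (X + C ζ₁)).coeff 1
          = (Polynomial.derivative (φ.comp (X + C ζ₁))).eval 0 := by
        rw [← Polynomial.coeff_zero_eq_eval_zero, Polynomial.coeff_derivative]; simp
      rw [h1, h2, Polynomial.derivative_comp]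
      simp [Polynomial.eval_comp]
    rw [← hd]
    rw [le_div_iff₀ hr₀]
    simpa using hc1
end

section
/- Let L be a complete algebraically closed non-archimedean field of residual characteristic zero and φ ∈ L[ζ] a polynomial mapping a closed ball B onto a closed ball B′ with a well-defined degree deg_B(φ). Then deg_B(φ) − 1 equals the sum over all critical points ω of φ lying in B of their multiplicities, i.e. deg_B(φ) − 1 = Σ_{ζ ∈ B} (deg_ζ(φ) − 1). -/
open Polynomial Metric Set

/-- The filled Julia set: points whose forward orbit does not escape to infinity. -/
def filledJulia {L : Type*} [NormedField L] (φ : Polynomial L) : Set L :=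
  {z | ¬ Filter.Tendsto (fun n => ‖(fun w => φ.eval w)^[n] z‖) Filter.atTop Filter.atTop}

/-- The Julia set, the boundary of the filled Julia set. -/
def juliaSet {L : Type*} [NormedField L] (φ : Polynomial L) : Set L :=
  frontier (filledJulia φ)

/-- The standard escape radius `R_φ`. -/
noncomputable def escapeRadius {L : Type*} [NormedField L] (φ : Polynomial L) : ℝ :=
  max (‖φ.leadingCoeff⁻¹‖ ^ ((1 : ℝ) / ((φ.natDegree : ℝ) - 1)))
    (⨆ i : Finset.range φ.natDegree,
      ‖φ.coeff i / φ.leadingCoeff‖ ^ ((1 : ℝ) / ((φ.natDegree : ℝ) - (i : ℕ))))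

/-- A (closed) ball of positive radius. -/
def IsClosedBall {L : Type*} [NormedField L] (B : Set L) : Prop :=
  ∃ a : L, ∃ r : ℝ, 0 < r ∧ B = Metric.closedBall a r

/-- A dynamical ball of level `n`: a maximal closed ball inside `φ^{-n}(D₀)` where
`D₀ = B⁺_{R_φ}(0)` is the level-0 ball. -/
def IsDynBall {L : Type*} [NormedField L] (φ : Polynomial L) (n : ℕ) (B : Set L) : Prop :=
  IsClosedBall B ∧
    B ⊆ (fun z => φ.eval z)^[n] ⁻¹' (Metric.closedBall 0 (escapeRadius φ)) ∧
    ∀ B', IsClosedBall B' → B ⊆ B' →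
      B' ⊆ (fun z => φ.eval z)^[n] ⁻¹' (Metric.closedBall 0 (escapeRadius φ)) → B' = B

/-- An end: a nested sequence of dynamical balls, one of each level. -/
def IsEnd {L : Type*} [NormedField L] (φ : Polynomial L) (E : ℕ → Set L) : Prop :=
  ∀ n, IsDynBall φ n (E n) ∧ E (n + 1) ⊆ E n

/-- The local degree `deg_z(φ)`: the multiplicity of `z` as a root of `φ - φ(z)`. -/
noncomputable def localDeg {K : Type*} [CommRing K] (φ : Polynomial K) (z : K) : ℕ :=
  Polynomial.rootMultiplicity z (φ - Polynomial.C (φ.eval z))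

/-- `φ : B → B'` has a well-defined degree `d`: every point of `B'` has exactly `d`
preimages in `B` counted with local degree. -/
def HasDegOn {K : Type*} [CommRing K] (φ : Polynomial K) (B B' : Set K) (d : ℕ) : Prop :=
  1 ≤ d ∧ ∀ w ∈ B', (∑ᶠ z ∈ {z ∈ B | φ.eval z = w}, localDeg φ z) = d

/-- A set is infraconnected if it cannot be split by two disjoint closed balls. -/
def Infraconnected {L : Type*} [NormedField L] (X : Set L) : Prop :=
  ∀ (a₀ : L) (r₀ : ℝ) (a₁ : L) (r₁ : ℝ),
    Disjoint (Metric.closedBall a₀ r₀) (Metric.closedBall a₁ r₁) →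
    X ⊆ Metric.closedBall a₀ r₀ ∪ Metric.closedBall a₁ r₁ →
    X ⊆ Metric.closedBall a₀ r₀ ∨ X ⊆ Metric.closedBall a₁ r₁

/-- The infraconnected component of `z` in the filled Julia set: the intersection of all
dynamical balls containing `z`. -/
def infraComp {L : Type*} [NormedField L] (φ : Polynomial L) (z : L) : Set L :=
  {w | ∀ n B, IsDynBall φ n B → z ∈ B → w ∈ B}

/-- The `p`-th iterate of `φ` as a polynomial. -/
noncomputable def polyIter {L : Type*} [CommRing L] (φ : Polynomial L) : ℕ → Polynomial L
  | 0 => Polynomial.X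
  | n + 1 => φ.comp (polyIter φ n)

/-- The cubic family `φ_{α,β}(ζ) = ζ³ - 3α²ζ + β`. -/
noncomputable def cubic {L : Type*} [NormedField L] (α β : L) : Polynomial L :=
  Polynomial.X ^ 3 - Polynomial.C (3 * α ^ 2) * Polynomial.X + Polynomial.C β

section RHAux

variable {L : Type*} [NormedField L] [IsUltrametricDist L]

private lemma norm_sub_le_max' (a b : L) : ‖a - b‖ ≤ max ‖a‖ ‖b‖ := by
  rw [sub_eq_add_neg]
  simpa using IsUltrametricDist.norm_add_le_max a (-b)

private lemma norm_sub_eq_left' {a b : L} (h : ‖b‖ < ‖a‖) : ‖a - b‖ = ‖a‖ := by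
  have hne : ‖a‖ ≠ ‖-b‖ := by rw [norm_neg]; exact h.ne'
  rw [sub_eq_add_neg, IsUltrametricDist.norm_add_eq_max_of_norm_ne_norm hne, norm_neg]
  exact max_eq_left h.le

private lemma norm_sub_eq_right' {a b : L} (h : ‖a‖ < ‖b‖) : ‖a - b‖ = ‖b‖ := by
  rw [← norm_neg, neg_sub]
  exact norm_sub_eq_left' h

private lemma newton_aux [IsAlgClosed L] (r : ℝ) (hr : 0 < r) :
    ∀ (n : ℕ) (p : L[X]), p ≠ 0 → p.natDegree = n →
      0 < ‖p.coeff ((p.roots.filter fun z => ‖z‖ ≤ r).card)‖ ∧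
      (∀ j, ‖p.coeff j‖ * r ^ j ≤
        ‖p.coeff ((p.roots.filter fun z => ‖z‖ ≤ r).card)‖ *
          r ^ ((p.roots.filter fun z => ‖z‖ ≤ r).card)) ∧
      (∀ j, (p.roots.filter fun z => ‖z‖ ≤ r).card < j →
        ‖p.coeff j‖ * r ^ j < ‖p.coeff ((p.roots.filter fun z => ‖z‖ ≤ r).card)‖ *
          r ^ ((p.roots.filter fun z => ‖z‖ ≤ r).card)) := by
  intro n
  induction n with
  | zero =>
    intro p hp hdeg
    obtain ⟨c, rfl⟩ := natDegree_eq_zero.mp hdeg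
    have hc : c ≠ 0 := fun h => hp (by rw [h, map_zero])
    have hroots : ((C c : L[X]).roots.filter fun z => ‖z‖ ≤ r).card = 0 := by
      rw [roots_C]; rfl
    rw [hroots]
    have hpos : 0 < ‖(C c : L[X]).coeff 0‖ := by
      rw [coeff_C_zero]; exact norm_pos_iff.mpr hc
    refine ⟨hpos, ?_, ?_⟩
    · intro j
      match j with
      | 0 => exact le_refl _
      | (j+1) =>
        rw [coeff_C, if_neg (Nat.succ_ne_zero j)]
        simp only [norm_zero, zero_mul]
        positivity
    · intro j hj
      match j, hj with
      | (j+1), _ =>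
        rw [coeff_C, if_neg (Nat.succ_ne_zero j)]
        simp only [norm_zero, zero_mul, pow_zero, mul_one]
        exact hpos
  | succ n ih =>
    intro p hp hdeg
    obtain ⟨z, hz⟩ := IsAlgClosed.exists_root p
      (by rw [degree_eq_natDegree hp, hdeg]; exact_mod_cast Nat.succ_ne_zero n)
    set q := p /ₘ (X - C z) with hqdef
    have hfac : (X - C z) * q = p := mul_divByMonic_eq_iff_isRoot.mpr hz
    have hq0 : q ≠ 0 := fun h => hp (by rw [← hfac, h, mul_zero])
    have hqdeg : q.natDegree = n := by
      have h1 := natDegree_mul (X_sub_C_ne_zero z) hq0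
      rw [hfac, hdeg, natDegree_X_sub_C] at h1
      omega
    obtain ⟨posq, Aq, Bq⟩ := ih q hq0 hqdeg
    set kq := (q.roots.filter fun z => ‖z‖ ≤ r).card with hkqdef
    have hroots : p.roots = z ::ₘ q.roots := by
      rw [← hfac, roots_mul (by rw [hfac]; exact hp), roots_X_sub_C,
        Multiset.singleton_add]
    have hc0 : ‖p.coeff 0‖ = ‖z‖ * ‖q.coeff 0‖ := by
      rw [← hfac, mul_coeff_zero, coeff_sub, coeff_X_zero, coeff_C_zero, zero_sub,
        norm_mul, norm_neg]
    have hcs : ∀ j, p.coeff (j + 1) = q.coeff j - z * q.coeff (j + 1) := by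
      intro j
      rw [← hfac, sub_mul, coeff_sub, coeff_X_mul, coeff_C_mul]
    have hbound : ∀ j, ‖p.coeff (j + 1)‖ * r ^ (j + 1) ≤
        max ((‖q.coeff j‖ * r ^ j) * r) (‖z‖ * (‖q.coeff (j + 1)‖ * r ^ (j + 1))) := by
      intro j
      rw [hcs j]
      calc ‖q.coeff j - z * q.coeff (j + 1)‖ * r ^ (j + 1)
          ≤ max ‖q.coeff j‖ ‖z * q.coeff (j + 1)‖ * r ^ (j + 1) :=
            mul_le_mul_of_nonneg_right (norm_sub_le_max' _ _) (by positivity)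
        _ = max (‖q.coeff j‖ * r ^ (j + 1)) (‖z * q.coeff (j + 1)‖ * r ^ (j + 1)) :=
            max_mul_of_nonneg _ _ (by positivity)
        _ = _ := by
            congr 1
            · rw [pow_succ]; ring
            · rw [norm_mul]; ring
    by_cases hzr : ‖z‖ ≤ r
    · -- root inside the ball
      have hk : (p.roots.filter fun w => ‖w‖ ≤ r).card = kq + 1 := by
        rw [hroots, Multiset.filter_cons, if_pos hzr, Multiset.card_add,
          Multiset.card_singleton]
        omega
      have hlt : ‖z * q.coeff (kq + 1)‖ < ‖q.coeff kq‖ := by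
        have hB := Bq (kq + 1) (Nat.lt_succ_self kq)
        have hrk : (0:ℝ) < r ^ kq := pow_pos hr kq
        have hB' : (‖q.coeff (kq + 1)‖ * r) * r ^ kq < ‖q.coeff kq‖ * r ^ kq := by
          calc (‖q.coeff (kq + 1)‖ * r) * r ^ kq = ‖q.coeff (kq + 1)‖ * r ^ (kq + 1) := by
                rw [pow_succ]; ring
            _ < ‖q.coeff kq‖ * r ^ kq := hB
        have h1 := lt_of_mul_lt_mul_right hB' hrk.le
        rw [norm_mul]
        calc ‖z‖ * ‖q.coeff (kq + 1)‖ ≤ r * ‖q.coeff (kq + 1)‖ :=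
              mul_le_mul_of_nonneg_right hzr (norm_nonneg _)
          _ = ‖q.coeff (kq + 1)‖ * r := mul_comm _ _
          _ < ‖q.coeff kq‖ := h1
      have hek : ‖p.coeff (kq + 1)‖ = ‖q.coeff kq‖ := by
        rw [hcs kq]; exact norm_sub_eq_left' hlt
      rw [hk, hek]
      refine ⟨posq, ?_, ?_⟩
      · intro j
        match j with
        | 0 =>
          rw [pow_zero, mul_one, hc0]
          calc ‖z‖ * ‖q.coeff 0‖ ≤ r * ‖q.coeff 0‖ :=
                mul_le_mul_of_nonneg_right hzr (norm_nonneg _)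
            _ ≤ r * (‖q.coeff kq‖ * r ^ kq) := by
                have h0 : ‖q.coeff 0‖ ≤ ‖q.coeff kq‖ * r ^ kq := by simpa using Aq 0
                exact mul_le_mul_of_nonneg_left h0 hr.le
            _ = ‖q.coeff kq‖ * r ^ (kq + 1) := by rw [pow_succ]; ring
        | (j+1) =>
          refine (hbound j).trans (max_le ?_ ?_)
          · calc ‖q.coeff j‖ * r ^ j * r ≤ (‖q.coeff kq‖ * r ^ kq) * r :=
                  mul_le_mul_of_nonneg_right (Aq j) hr.le
              _ = ‖q.coeff kq‖ * r ^ (kq + 1) := by rw [pow_succ]; ring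
          · calc ‖z‖ * (‖q.coeff (j + 1)‖ * r ^ (j + 1))
                ≤ r * (‖q.coeff (j + 1)‖ * r ^ (j + 1)) :=
                  mul_le_mul_of_nonneg_right hzr (by positivity)
              _ ≤ r * (‖q.coeff kq‖ * r ^ kq) :=
                  mul_le_mul_of_nonneg_left (Aq (j + 1)) hr.le
              _ = ‖q.coeff kq‖ * r ^ (kq + 1) := by rw [pow_succ]; ring
      · intro j hj
        match j, hj with
        | (j+1), hj =>
          have hj' : kq < j := by omega
          refine (hbound j).trans_lt (max_lt ?_ ?_)
          · calc ‖q.coeff j‖ * r ^ j * r < (‖q.coeff kq‖ * r ^ kq) * r :=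
                  mul_lt_mul_of_pos_right (Bq j hj') hr
              _ = ‖q.coeff kq‖ * r ^ (kq + 1) := by rw [pow_succ]; ring
          · calc ‖z‖ * (‖q.coeff (j + 1)‖ * r ^ (j + 1))
                ≤ r * (‖q.coeff (j + 1)‖ * r ^ (j + 1)) :=
                  mul_le_mul_of_nonneg_right hzr (by positivity)
              _ < r * (‖q.coeff kq‖ * r ^ kq) :=
                  mul_lt_mul_of_pos_left (Bq (j + 1) (by omega)) hr
              _ = ‖q.coeff kq‖ * r ^ (kq + 1) := by rw [pow_succ]; ring
    · -- root outside the ball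
      push_neg at hzr
      have hzpos : (0:ℝ) < ‖z‖ := hr.trans hzr
      have hk : (p.roots.filter fun w => ‖w‖ ≤ r).card = kq := by
        rw [hroots, Multiset.filter_cons, if_neg (not_le.mpr hzr), Multiset.card_add]
        simp
        rfl
      have hek : ‖p.coeff kq‖ = ‖z‖ * ‖q.coeff kq‖ := by
        rcases Nat.eq_zero_or_pos kq with h0 | hposk
        · rw [h0]; exact hc0
        · obtain ⟨m, hm⟩ : ∃ m, kq = m + 1 := ⟨kq - 1, by omega⟩
          rw [hm] at posq Aq ⊢
          have hA := Aq m
          have hrk : (0:ℝ) < r ^ m := pow_pos hr m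
          have hA' : ‖q.coeff m‖ * r ^ m ≤ (‖q.coeff (m + 1)‖ * r) * r ^ m := by
            calc ‖q.coeff m‖ * r ^ m ≤ ‖q.coeff (m + 1)‖ * r ^ (m + 1) := hA
              _ = (‖q.coeff (m + 1)‖ * r) * r ^ m := by rw [pow_succ]; ring
          have h2 := le_of_mul_le_mul_right hA' hrk
          have h3 : ‖q.coeff (m + 1)‖ * r < ‖z‖ * ‖q.coeff (m + 1)‖ := by
            calc ‖q.coeff (m + 1)‖ * r < ‖q.coeff (m + 1)‖ * ‖z‖ :=
                  (mul_lt_mul_iff_right₀ posq).mpr hzr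
              _ = ‖z‖ * ‖q.coeff (m + 1)‖ := mul_comm _ _
          have hdom : ‖q.coeff m‖ < ‖z * q.coeff (m + 1)‖ := by
            rw [norm_mul]; exact h2.trans_lt h3
          rw [hcs m, norm_sub_eq_right' hdom, norm_mul]
      rw [hk, hek]
      have hGq : (0:ℝ) < ‖q.coeff kq‖ * r ^ kq := by positivity
      refine ⟨by positivity, ?_, ?_⟩
      · intro j
        match j with
        | 0 =>
          rw [pow_zero, mul_one, hc0]
          have h1 : ‖q.coeff 0‖ ≤ ‖q.coeff kq‖ * r ^ kq := by simpa using Aq 0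
          calc ‖z‖ * ‖q.coeff 0‖ ≤ ‖z‖ * (‖q.coeff kq‖ * r ^ kq) :=
                mul_le_mul_of_nonneg_left h1 hzpos.le
            _ = ‖z‖ * ‖q.coeff kq‖ * r ^ kq := by ring
        | (j+1) =>
          refine (hbound j).trans (max_le ?_ ?_)
          · calc ‖q.coeff j‖ * r ^ j * r ≤ (‖q.coeff kq‖ * r ^ kq) * r :=
                  mul_le_mul_of_nonneg_right (Aq j) hr.le
              _ ≤ (‖q.coeff kq‖ * r ^ kq) * ‖z‖ :=
                  mul_le_mul_of_nonneg_left hzr.le hGq.le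
              _ = ‖z‖ * ‖q.coeff kq‖ * r ^ kq := by ring
          · calc ‖z‖ * (‖q.coeff (j + 1)‖ * r ^ (j + 1))
                ≤ ‖z‖ * (‖q.coeff kq‖ * r ^ kq) :=
                  mul_le_mul_of_nonneg_left (Aq (j + 1)) hzpos.le
              _ = ‖z‖ * ‖q.coeff kq‖ * r ^ kq := by ring
      · intro j hj
        match j, hj with
        | (j+1), hj =>
          refine (hbound j).trans_lt (max_lt ?_ ?_)
          · calc ‖q.coeff j‖ * r ^ j * r ≤ (‖q.coeff kq‖ * r ^ kq) * r :=
                  mul_le_mul_of_nonneg_right (Aq j) hr.le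
              _ < (‖q.coeff kq‖ * r ^ kq) * ‖z‖ := (mul_lt_mul_iff_right₀ hGq).mpr hzr
              _ = ‖z‖ * ‖q.coeff kq‖ * r ^ kq := by ring
          · calc ‖z‖ * (‖q.coeff (j + 1)‖ * r ^ (j + 1))
                < ‖z‖ * (‖q.coeff kq‖ * r ^ kq) :=
                  mul_lt_mul_of_pos_left (Bq (j + 1) (by omega)) hzpos
              _ = ‖z‖ * ‖q.coeff kq‖ * r ^ kq := by ring

private lemma deriv_count [IsAlgClosed L] (hnorm : ∀ n : ℕ, n ≠ 0 → ‖(n : L)‖ = 1)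
    (p : L[X]) (hp : p ≠ 0) (hp' : derivative p ≠ 0) (h0 : p.coeff 0 = 0)
    (r : ℝ) (hr : 0 < r) :
    (p.roots.filter fun z => ‖z‖ ≤ r).card
      = ((derivative p).roots.filter fun z => ‖z‖ ≤ r).card + 1 := by
  obtain ⟨pos_p, A_p, B_p⟩ := newton_aux r hr p.natDegree p hp rfl
  obtain ⟨pos', A', B'⟩ := newton_aux r hr (derivative p).natDegree (derivative p) hp' rfl
  set k := (p.roots.filter fun z => ‖z‖ ≤ r).card with hkdef
  set k' := ((derivative p).roots.filter fun z => ‖z‖ ≤ r).card with hk'def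
  have hnc : ∀ j, ‖(derivative p).coeff j‖ = ‖p.coeff (j + 1)‖ := by
    intro j
    rw [coeff_derivative, norm_mul]
    have hcast : ((j : L) + 1) = ((j + 1 : ℕ) : L) := by push_cast; ring
    rw [hcast, hnorm (j + 1) (Nat.succ_ne_zero j), mul_one]
  have hk1 : k ≠ 0 := by
    intro h
    rw [h, h0] at pos_p
    simp at pos_p
  obtain ⟨m, hm⟩ : ∃ m, k = m + 1 := ⟨k - 1, by omega⟩
  rcases lt_trichotomy m k' with h | h | h
  · exfalso
    have h1 := B_p (k' + 1) (by omega)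
    have h2 := A' m
    rw [hnc, hnc] at h2
    have h3 : ‖p.coeff (m + 1)‖ * r ^ (m + 1) ≤ ‖p.coeff (k' + 1)‖ * r ^ (k' + 1) := by
      calc ‖p.coeff (m + 1)‖ * r ^ (m + 1) = (‖p.coeff (m + 1)‖ * r ^ m) * r := by
            rw [pow_succ]; ring
        _ ≤ (‖p.coeff (k' + 1)‖ * r ^ k') * r := mul_le_mul_of_nonneg_right h2 hr.le
        _ = ‖p.coeff (k' + 1)‖ * r ^ (k' + 1) := by rw [pow_succ]; ring
    rw [← hm] at h3
    exact lt_irrefl _ (h1.trans_le h3)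
  · omega
  · exfalso
    have h1 := B' m (by omega)
    rw [hnc, hnc] at h1
    have h2 := A_p (k' + 1)
    have h3 : ‖p.coeff (m + 1)‖ * r ^ (m + 1) < ‖p.coeff (k' + 1)‖ * r ^ (k' + 1) := by
      calc ‖p.coeff (m + 1)‖ * r ^ (m + 1) = (‖p.coeff (m + 1)‖ * r ^ m) * r := by
            rw [pow_succ]; ring
        _ < (‖p.coeff (k' + 1)‖ * r ^ k') * r := mul_lt_mul_of_pos_right h1 hr
        _ = ‖p.coeff (k' + 1)‖ * r ^ (k' + 1) := by rw [pow_succ]; ring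
    rw [← hm] at h3
    exact lt_irrefl _ (h3.trans_le h2)

private lemma roots_comp_X_add_C [IsAlgClosed L] (p : L[X]) (hp : p ≠ 0) (a : L) :
    (p.comp (X + C a)).roots = p.roots.map (fun z => z - a) := by
  have hlc : p.leadingCoeff ≠ 0 := leadingCoeff_ne_zero.mpr hp
  conv_lhs => rw [Splits.eq_prod_roots (IsAlgClosed.splits p)]
  rw [mul_comp, C_comp, multiset_prod_comp, Multiset.map_map]
  have hmap : p.roots.map ((fun pp => pp.comp (X + C a)) ∘ fun w => X - C w)
      = (p.roots.map fun z => z - a).map fun w => X - C w := by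
    rw [Multiset.map_map]
    apply Multiset.map_congr rfl
    intro w _
    simp only [Function.comp_apply, sub_comp, X_comp, C_comp, map_sub]
    ring
  rw [hmap, roots_C_mul _ hlc, roots_multiset_prod_X_sub_C]

private lemma finsum_mem_count [DecidableEq L] (M : Multiset L) (S : Set L) (P : L → Prop) [DecidablePred P]
    (hSP : ∀ z, z ∈ S ↔ P z) :
    ∑ᶠ z ∈ S, M.count z = (M.filter P).card := by
  classical
  have h1 : ∑ᶠ z ∈ S, M.count z = ∑ᶠ z ∈ (↑(M.toFinset.filter P) : Set L), M.count z := by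
    apply finsum_mem_inter_support_eq
    ext z
    simp only [Set.mem_inter_iff, Function.mem_support, Finset.coe_filter,
      Set.mem_setOf_eq, Multiset.mem_toFinset, hSP z]
    constructor
    · rintro ⟨hz, hc⟩
      exact ⟨⟨by rwa [← Multiset.count_pos, Nat.pos_iff_ne_zero], hz⟩, hc⟩
    · rintro ⟨⟨_, hz⟩, hc⟩
      exact ⟨hz, hc⟩
  rw [h1, finsum_mem_coe_finset]
  rw [← Multiset.toFinset_sum_count_eq (M.filter P), Multiset.toFinset_filter]
  apply Finset.sum_congr rfl
  intro z hz
  rw [Multiset.count_filter, if_pos (Finset.mem_filter.mp hz).2]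

end RHAux

/-- **Riemann–Hurwitz count on a ball.** If `φ` maps the closed ball `B` onto the
closed ball `φ(B)` with well-defined degree `d`, then `d - 1` is the sum of the
multiplicities of the critical points of `φ` in `B`. -/
theorem degOn_sub_one_eq_sum_critical_multiplicities {L : Type*} [NormedField L] [IsUltrametricDist L] [CompleteSpace L] [IsAlgClosed L]
    (hdense : ∀ r : ℝ, 0 < r → ∀ ε : ℝ, 0 < ε → ∃ x : L, x ≠ 0 ∧ |‖x‖ - r| < ε)
    (hres : ∀ q : ℚ, q ≠ 0 → ‖(q : L)‖ = 1)
    (φ : Polynomial L) (a : L) (r : ℝ) (hr : 0 < r)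
    (hB' : IsClosedBall ((fun z => φ.eval z) '' Metric.closedBall a r))
    (d : ℕ)
    (hdeg : HasDegOn φ (Metric.closedBall a r)
      ((fun z => φ.eval z) '' Metric.closedBall a r) d) :
    d - 1 = ∑ᶠ z ∈ Metric.closedBall a r, (localDeg φ z - 1) := by
  classical
  obtain ⟨hd1, hdw⟩ := hdeg
  have hnorm : ∀ n : ℕ, n ≠ 0 → ‖(n : L)‖ = 1 := by
    intro n hn
    have h := hres (n : ℚ) (by exact_mod_cast hn)
    rwa [Rat.cast_natCast] at h
  haveI : CharZero L := by
    refine ⟨fun m n hmn => ?_⟩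
    by_contra hne
    rcases Nat.lt_or_ge m n with hlt | hge
    · have h0 : ((n - m : ℕ) : L) = 0 := by
        rw [Nat.cast_sub hlt.le, hmn, sub_self]
      have hh := hnorm (n - m) (by omega)
      rw [h0, norm_zero] at hh
      norm_num at hh
    · have hlt : n < m := by omega
      have h0 : ((m - n : ℕ) : L) = 0 := by
        rw [Nat.cast_sub hlt.le, hmn, sub_self]
      have hh := hnorm (m - n) (by omega)
      rw [h0, norm_zero] at hh
      norm_num at hh
  set w := φ.eval a with hwdef
  have hw0 : w ∈ (fun z => φ.eval z) '' Metric.closedBall a r :=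
    ⟨a, mem_closedBall_self hr.le, rfl⟩
  have hφdeg : 0 < φ.natDegree := by
    by_contra h
    push_neg at h
    obtain ⟨c, rfl⟩ := natDegree_eq_zero.mp (Nat.le_zero.mp h)
    have hthis := hdw w hw0
    have hzero : ∀ z ∈ {z ∈ Metric.closedBall a r | (C c).eval z = w},
        localDeg (C c) z = 0 := by
      intro z _
      unfold localDeg
      rw [eval_C, sub_self, rootMultiplicity_zero]
    rw [finsum_mem_congr rfl hzero] at hthis
    simp only [finsum_mem_zero] at hthis
    omega
  set ψ := φ - C w with hψdef
  have hψdeg : ψ.natDegree = φ.natDegree := natDegree_sub_C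
  have hψ0 : ψ ≠ 0 := fun h => by rw [h, natDegree_zero] at hψdeg; omega
  have hderψ : derivative ψ = derivative φ := by
    rw [hψdef, derivative_sub, derivative_C, sub_zero]
  have hd' : derivative φ ≠ 0 := by
    intro h
    have := natDegree_eq_zero_of_derivative_eq_zero h
    omega
  -- d equals the number of roots of ψ in the ball
  have hfiber : d = (ψ.roots.filter fun z => ‖z - a‖ ≤ r).card := by
    have h1 := hdw w hw0
    have h2 : ∀ z ∈ {z ∈ Metric.closedBall a r | φ.eval z = w},
        localDeg φ z = ψ.roots.count z := by
      intro z hz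
      rw [count_roots]
      unfold localDeg
      rw [hz.2]
    rw [finsum_mem_congr rfl h2] at h1
    have h3 : ∑ᶠ z ∈ {z ∈ Metric.closedBall a r | φ.eval z = w}, ψ.roots.count z
        = ∑ᶠ z ∈ Metric.closedBall a r, ψ.roots.count z := by
      apply finsum_mem_inter_support_eq
      ext z
      simp only [Set.mem_inter_iff, Function.mem_support, Set.mem_setOf_eq]
      constructor
      · rintro ⟨⟨hb, _⟩, hc⟩
        exact ⟨hb, hc⟩
      · rintro ⟨hb, hc⟩
        refine ⟨⟨hb, ?_⟩, hc⟩
        have hmem : z ∈ ψ.roots := by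
          rw [← Multiset.count_pos, Nat.pos_iff_ne_zero]
          exact hc
        have hroot := isRoot_of_mem_roots hmem
        have heq : φ.eval z - w = 0 := by simpa [hψdef] using hroot
        exact sub_eq_zero.mp heq
    rw [h3, finsum_mem_count ψ.roots (Metric.closedBall a r) (fun z => ‖z - a‖ ≤ r)
      (fun z => mem_closedBall_iff_norm)] at h1
    exact h1.symm
  -- the right-hand side counts roots of the derivative in the ball
  have hRHS : ∑ᶠ z ∈ Metric.closedBall a r, (localDeg φ z - 1)
      = ((derivative φ).roots.filter fun z => ‖z - a‖ ≤ r).card := by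
    have h2 : ∀ z ∈ Metric.closedBall a r,
        localDeg φ z - 1 = (derivative φ).roots.count z := by
      intro z _
      rw [count_roots]
      unfold localDeg
      have hroot : (φ - C (φ.eval z)).IsRoot z := by
        simp [IsRoot]
      have h := derivative_rootMultiplicity_of_root hroot
      rw [derivative_sub, derivative_C, sub_zero] at h
      exact h.symm
    rw [finsum_mem_congr rfl h2, finsum_mem_count _ _ (fun z => ‖z - a‖ ≤ r)
      (fun z => mem_closedBall_iff_norm)]
  -- key count via the Newton polygon after recentering
  have hkey : (ψ.roots.filter fun z => ‖z - a‖ ≤ r).card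
      = ((derivative φ).roots.filter fun z => ‖z - a‖ ≤ r).card + 1 := by
    set p := ψ.comp (X + C a) with hpdef
    have hcompinj : ∀ q : L[X], q.comp (X + C a) = 0 → q = 0 := by
      intro q h
      have hq : (q.comp (X + C a)).comp (X - C a) = q := by
        rw [comp_assoc]
        have : (X + C a).comp (X - C a) = (X : L[X]) := by
          simp [add_comp, X_comp, C_comp]
        rw [this, comp_X]
      rw [h, zero_comp] at hq
      exact hq.symm
    have hpne : p ≠ 0 := fun h => hψ0 (hcompinj ψ h)
    have hder : derivative p = (derivative φ).comp (X + C a) := by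
      rw [hpdef, derivative_comp, ← hderψ]
      simp
    have hdp : derivative p ≠ 0 := by
      rw [hder]
      intro h
      exact hd' (hcompinj _ h)
    have h00 : p.coeff 0 = 0 := by
      rw [coeff_zero_eq_eval_zero, hpdef, eval_comp]
      simp [hψdef, hwdef]
    have hcount := deriv_count hnorm p hpne hdp h00 r hr
    have hrootsp : p.roots = ψ.roots.map (fun z => z - a) :=
      roots_comp_X_add_C ψ hψ0 a
    have hrootsdp : (derivative p).roots = (derivative φ).roots.map (fun z => z - a) := by
      rw [hder]
      exact roots_comp_X_add_C _ hd' a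
    rw [hrootsp, hrootsdp] at hcount
    rw [← Multiset.countP_eq_card_filter, ← Multiset.countP_eq_card_filter,
      Multiset.countP_map, Multiset.countP_map] at hcount
    simpa [Multiset.countP_eq_card_filter, Function.comp] using hcount
  rw [hRHS]
  omega
end

section
/- Induced action on affine partitions: Let φ ∈ L[ζ], let B₀ be a closed ball and B₁ = φ(B₀), with P₀, P₁ the associated affine partitions (the partitions into residue classes after affine identification with the closed unit ball). Then B ↦ φ(B) is a well-defined map φ* : P₀ → P₁ which is polynomial with respect to the affine structures over the residual field, with deg(φ*) = deg_{B₀}(φ), and deg_B(φ*) = deg_B(φ) for every B ∈ P₀. -/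
open Polynomial Metric Set

/-- The ring of integers `{x : ‖x‖ ≤ 1}` of an ultrametric normed field. -/
def normRing (L : Type*) [NormedField L] [IsUltrametricDist L] : Subring L where
  carrier := {x | ‖x‖ ≤ 1}
  mul_mem' := by
    intro a b ha hb
    simp only [Set.mem_setOf_eq, norm_mul] at *
    calc ‖a‖ * ‖b‖ ≤ 1 * 1 := mul_le_mul ha hb (norm_nonneg b) zero_le_one
    _ = 1 := by ring
  one_mem' := by simp
  add_mem' := by
    intro a b ha hb
    exact le_trans (IsUltrametricDist.norm_add_le_max a b) (max_le ha hb)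
  zero_mem' := by simp
  neg_mem' := by intro a ha; simpa using ha

/-- The maximal ideal `{x : ‖x‖ < 1}` of the ring of integers. -/
def normIdeal (L : Type*) [NormedField L] [IsUltrametricDist L] : Ideal (normRing L) where
  carrier := {x | ‖(x : L)‖ < 1}
  add_mem' := by
    intro a b ha hb
    exact lt_of_le_of_lt (IsUltrametricDist.norm_add_le_max (a : L) b) (max_lt ha hb)
  zero_mem' := by simp
  smul_mem' := by
    intro c x hx
    simp only [Set.mem_setOf_eq, smul_eq_mul, Subring.coe_mul, norm_mul] at *
    calc ‖(c : L)‖ * ‖(x : L)‖ ≤ 1 * ‖(x : L)‖ :=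
      mul_le_mul_of_nonneg_right c.2 (norm_nonneg _)
    _ < 1 := by simpa using hx

/-- The residue field `O/M` of an ultrametric normed field. -/
def ResField (L : Type*) [NormedField L] [IsUltrametricDist L] :=
  (normRing L) ⧸ (normIdeal L)

noncomputable instance (L : Type*) [NormedField L] [IsUltrametricDist L] :
    CommRing (ResField L) := Ideal.Quotient.commRing (normIdeal L)

/-- Reduction map `L → O/M` (junk value `0` outside the ring of integers). -/
noncomputable def res {L : Type*} [NormedField L] [IsUltrametricDist L] (x : L) :
    ResField L :=
  if h : ‖x‖ ≤ 1 then Ideal.Quotient.mk (normIdeal L) ⟨x, h⟩ else 0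



section RootMult
variable {R : Type*} [CommRing R] [IsDomain R]

theorem rootMultiplicity_unit_mul {u : R} (hu : IsUnit u) (p : Polynomial R) (x : R) :
    rootMultiplicity x (C u * p) = rootMultiplicity x p := by
  rcases eq_or_ne p 0 with rfl | hp
  · simp
  have hCu : IsUnit (C u) := hu.map (C : R →+* Polynomial R)
  have hne : C u * p ≠ 0 := mul_ne_zero (hCu.ne_zero) hp
  rw [Polynomial.rootMultiplicity_mul hne]
  have : rootMultiplicity x (C u) = 0 := by
    apply Polynomial.rootMultiplicity_eq_zero
    simp only [Polynomial.IsRoot, Polynomial.eval_C]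
    exact hu.ne_zero
  omega

theorem rootMultiplicity_comp_affine {u : R} (hu : IsUnit u) (p : Polynomial R) (a x : R) :
    rootMultiplicity x (p.comp (C a + C u * X)) = rootMultiplicity (a + u * x) p := by
  rcases eq_or_ne p 0 with rfl | hp
  · simp
  obtain ⟨v, huv⟩ := hu.exists_right_inv
  have hvu : v * u = 1 := by rw [mul_comm]; exact huv
  set A : Polynomial R := C a + C u * X with hA
  set A' : Polynomial R := C v * (X - C a) with hA'
  have hAA' : A.comp A' = X := by
    simp only [hA, hA', add_comp, C_comp, mul_comp, X_comp]
    have : C u * C v = 1 := by rw [← C_mul, huv, C_1]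
    calc C a + C u * (C v * (X - C a))
        = C a + (C u * C v) * X - (C u * C v) * C a := by ring
    _ = X := by rw [this]; ring
  have hidem : ∀ q : Polynomial R, (q.comp A).comp A' = q := by
    intro q
    rw [Polynomial.comp_assoc, hAA', Polynomial.comp_X]
  have hq : p.comp A ≠ 0 := by
    intro h
    have h2 := congrArg (fun q => q.comp A') h
    simp only [hidem, zero_comp] at h2
    exact hp h2
  have key1 : (X - C (a + u * x)).comp A = C u * (X - C x) := by
    simp only [hA, sub_comp, X_comp, C_comp]
    rw [C_add, C_mul]
    ring
  have key2 : (X - C x).comp A' = C v * (X - C (a + u * x)) := by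
    simp only [hA', sub_comp, X_comp, C_comp]
    have h1 : C v * C u = 1 := by rw [← C_mul, hvu, C_1]
    rw [C_add, C_mul]
    calc C v * (X - C a) - C x
        = C v * (X - (C a + C u * C x)) + (C v * C u - 1) * C x := by ring
    _ = C v * (X - (C a + C u * C x)) := by rw [h1]; ring
  have aux : ∀ n : ℕ, (X - C (a + u * x)) ^ n ∣ p ↔ (X - C x) ^ n ∣ p.comp A := by
    intro n
    constructor
    · rintro ⟨c, hc⟩
      refine ⟨(C u) ^ n * c.comp A, ?_⟩
      rw [hc, mul_comp, pow_comp, key1, mul_pow]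
      ring
    · rintro ⟨c, hc⟩
      have : p = ((X - C x) ^ n * c).comp A' := by rw [← hc, hidem]
      rw [mul_comp, pow_comp, key2] at this
      refine ⟨(C v) ^ n * c.comp A', ?_⟩
      rw [this, mul_pow]; ring
  apply le_antisymm
  · rw [Polynomial.le_rootMultiplicity_iff hp, aux]
    exact Polynomial.pow_rootMultiplicity_dvd _ _
  · rw [Polynomial.le_rootMultiplicity_iff hq, ← aux]
    exact Polynomial.pow_rootMultiplicity_dvd _ _

end RootMult

section ResFieldFacts
variable {L : Type*} [NormedField L] [IsUltrametricDist L]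

theorem mem_normRing_iff {x : L} : x ∈ normRing L ↔ ‖x‖ ≤ 1 := Iff.rfl

theorem mem_normIdeal_iff {x : normRing L} : x ∈ normIdeal L ↔ ‖(x : L)‖ < 1 := Iff.rfl

instance (L : Type*) [NormedField L] [IsUltrametricDist L] : (normIdeal L).IsPrime := by
  rw [Ideal.isPrime_iff]
  constructor
  · intro h
    have h1 : (1 : normRing L) ∈ normIdeal L := h ▸ Submodule.mem_top
    rw [mem_normIdeal_iff] at h1
    simp at h1
  · intro x y hxy
    rw [mem_normIdeal_iff] at hxy ⊢
    rw [mem_normIdeal_iff]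
    by_contra hcon
    push_neg at hcon
    obtain ⟨hx, hy⟩ := hcon
    have : (1 : ℝ) ≤ ‖(x : L)‖ * ‖(y : L)‖ :=
      one_le_mul_of_one_le_of_one_le hx hy
    rw [Subring.coe_mul, norm_mul] at hxy
    linarith

noncomputable instance (L : Type*) [NormedField L] [IsUltrametricDist L] :
    IsDomain (ResField L) :=
  inferInstanceAs (IsDomain ((normRing L) ⧸ (normIdeal L)))

/-- The quotient map `O → O/M` as a ring hom. -/
noncomputable def resHom (L : Type*) [NormedField L] [IsUltrametricDist L] :
    normRing L →+* ResField L := Ideal.Quotient.mk (normIdeal L)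

theorem resHom_surjective : Function.Surjective (resHom L) :=
  Ideal.Quotient.mk_surjective

theorem resHom_eq_zero_iff {x : normRing L} : resHom L x = 0 ↔ ‖(x : L)‖ < 1 := by
  rw [← mem_normIdeal_iff]
  exact Ideal.Quotient.eq_zero_iff_mem

theorem res_eq_resHom (x : L) (hx : ‖x‖ ≤ 1) : res x = resHom L ⟨x, hx⟩ := by
  simp only [res, dif_pos hx]; exact dif_pos hx

theorem res_eq_res {x y : L} (hx : ‖x‖ ≤ 1) (hy : ‖y‖ ≤ 1) (hxy : ‖x - y‖ < 1) :
    res x = res y := by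
  rw [res_eq_resHom x hx, res_eq_resHom y hy, ← sub_eq_zero, ← map_sub]
  rw [resHom_eq_zero_iff]
  exact hxy

theorem eval_map_resHom (G : Polynomial (normRing L)) (x : normRing L) :
    (G.map (resHom L)).eval (resHom L x) = resHom L (G.eval x) := by
  rw [Polynomial.eval_map, Polynomial.eval₂_at_apply]

theorem eval_map_subtype (G : Polynomial (normRing L)) (x : normRing L) :
    (G.map (normRing L).subtype).eval (x : L) = ((G.eval x : normRing L) : L) := by
  rw [Polynomial.eval_map]
  exact Polynomial.eval₂_at_apply ((normRing L).subtype) x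

theorem subtype_injective : Function.Injective ((normRing L).subtype) :=
  fun a b h => Subtype.ext h

theorem map_subtype_injective :
    Function.Injective (Polynomial.map ((normRing L).subtype)) :=
  Polynomial.map_injective _ subtype_injective

end ResFieldFacts

section Core
variable {L : Type*} [NormedField L] [IsUltrametricDist L] [IsAlgClosed L]

theorem core_count (G : Polynomial (normRing L)) (hG : G.map (resHom L) ≠ 0) :
    Multiset.card (((G.map (normRing L).subtype).roots).filter (fun z => ‖z‖ < 1))
        = rootMultiplicity 0 (G.map (resHom L)) ∧
    Multiset.card (((G.map (normRing L).subtype).roots).filter (fun z => ‖z‖ ≤ 1))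
        = (G.map (resHom L)).natDegree := by
  classical
  set ι := (normRing L).subtype with hι
  suffices H : ∀ (n : ℕ) (G : Polynomial (normRing L)),
      (G.map ι).natDegree = n → G.map (resHom L) ≠ 0 →
      Multiset.card (((G.map ι).roots).filter (fun z => ‖z‖ < 1))
          = rootMultiplicity 0 (G.map (resHom L)) ∧
      Multiset.card (((G.map ι).roots).filter (fun z => ‖z‖ ≤ 1))
          = (G.map (resHom L)).natDegree by
    exact H _ G rfl hG
  intro n
  induction n with
  | zero =>
    intro G hn hG
    have hG0 : G ≠ 0 := by rintro rfl; simp at hG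
    have hGι : G.map ι ≠ 0 := by
      intro h; exact hG0 (map_subtype_injective (by simpa using h))
    have hC : G.map ι = C ((G.map ι).coeff 0) := eq_C_of_natDegree_eq_zero hn
    have hdeg : (G.map (resHom L)).natDegree = 0 := by
      have h1 : (G.map (resHom L)).natDegree ≤ G.natDegree := natDegree_map_le
      have h2 : G.natDegree = (G.map ι).natDegree :=
        (natDegree_map_eq_of_injective subtype_injective G).symm
      omega
    have hCπ : G.map (resHom L) = C ((G.map (resHom L)).coeff 0) :=
      eq_C_of_natDegree_eq_zero hdeg
    have hb : (G.map (resHom L)).coeff 0 ≠ 0 := by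
      intro h; apply hG; rw [hCπ, h, map_zero]
    constructor
    · rw [hC, roots_C]
      rw [hCπ, Polynomial.rootMultiplicity_eq_zero]
      · simp
      · simpa [Polynomial.IsRoot, Polynomial.coeff_map] using hb
    · rw [hC, roots_C, hdeg]; simp
  | succ n IH =>
    intro G hn hG
    have hG0 : G ≠ 0 := by rintro rfl; simp at hG
    have hGι : G.map ι ≠ 0 := by
      intro h; exact hG0 (map_subtype_injective (by simpa using h))
    have hdegpos : (G.map ι).degree ≠ 0 := by
      rw [Polynomial.degree_eq_natDegree hGι, hn]
      exact_mod_cast Nat.succ_ne_zero n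
    obtain ⟨z, hz⟩ := IsAlgClosed.exists_root (G.map ι) hdegpos
    by_cases hz1 : ‖z‖ ≤ 1
    · -- root inside the closed unit ball
      set z₀ : normRing L := ⟨z, hz1⟩ with hz₀
      have hroot : G.eval z₀ = 0 := by
        apply subtype_injective
        have := eval_map_subtype G z₀
        rw [show ((z₀ : normRing L) : L) = z from rfl] at this
        rw [← hι] at this
        simpa [hz.eq_zero] using this.symm
      obtain ⟨H, hH⟩ := (Polynomial.dvd_iff_isRoot.mpr hroot)
      have mι : G.map ι = (X - C z) * H.map ι := by
        have hzz : ι z₀ = z := rfl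
        rw [hH, Polynomial.map_mul, Polynomial.map_sub, Polynomial.map_X, Polynomial.map_C, hzz]
      have Hι0 : H.map ι ≠ 0 := by
        intro h; rw [h, mul_zero] at mι; exact hGι mι
      have mπ : G.map (resHom L) = (X - C (resHom L z₀)) * H.map (resHom L) := by
        rw [hH, Polynomial.map_mul, Polynomial.map_sub, Polynomial.map_X, Polynomial.map_C]
      have Hπ0 : H.map (resHom L) ≠ 0 := by
        intro h; rw [h, mul_zero] at mπ; exact hG mπ
      have hdegH : (H.map ι).natDegree = n := by
        have := natDegree_mul (X_sub_C_ne_zero z) Hι0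
        rw [← mι, natDegree_X_sub_C, hn] at this
        omega
      obtain ⟨ih1, ih2⟩ := IH H hdegH Hπ0
      have hroots : (G.map ι).roots = {z} + (H.map ι).roots := by
        rw [mι, Polynomial.roots_mul (mι ▸ hGι), roots_X_sub_C]
      constructor
      · rw [hroots, Multiset.filter_add, Multiset.card_add, Multiset.filter_singleton, ih1,
          mπ, Polynomial.rootMultiplicity_mul (mπ ▸ hG), Polynomial.rootMultiplicity_X_sub_C]
        have hiff : resHom L z₀ = 0 ↔ ‖z‖ < 1 := resHom_eq_zero_iff
        by_cases hlt : ‖z‖ < 1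
        · rw [if_pos hlt, if_pos (Eq.symm (hiff.mpr hlt))]; simp
        · rw [if_neg hlt, if_neg (fun h => hlt (hiff.mp h.symm))]; simp
      · rw [hroots, Multiset.filter_add, Multiset.card_add, Multiset.filter_singleton,
          if_pos hz1, ih2, mπ, natDegree_mul (X_sub_C_ne_zero _) Hπ0, natDegree_X_sub_C]
        simp
    · -- root outside the closed unit ball
      push_neg at hz1
      have hzne : z ≠ 0 := by
        intro h; rw [h, norm_zero] at hz1; linarith
      have hzinv : ‖z⁻¹‖ < 1 := by
        rw [norm_inv]
        rw [inv_lt_one_iff₀]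
        right; exact hz1
      set v₀ : normRing L := ⟨z⁻¹, le_of_lt hzinv⟩ with hv₀
      set U₀ : Polynomial (normRing L) := 1 - C v₀ * X with hU₀
      set U : Polynomial L := 1 - C z⁻¹ * X with hU
      have hUmap : U₀.map ι = U := by
        simp [hU₀, hU, Polynomial.map_sub, Polynomial.map_mul]
        rfl
      have hUfact : U = C (-z⁻¹) * (X - C z) := by
        rw [hU]
        rw [map_neg]
        have : C z⁻¹ * C z = 1 := by rw [← C_mul, inv_mul_cancel₀ hzne, C_1]
        calc (1 : Polynomial L) - C z⁻¹ * X
            = -C z⁻¹ * (X - C z) + (1 - C z⁻¹ * C z) := by ring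
        _ = -C z⁻¹ * (X - C z) := by rw [this]; ring
      have hUdvd : U ∣ G.map ι := by
        rw [hUfact]
        obtain ⟨q, hq⟩ := Polynomial.dvd_iff_isRoot.mpr hz
        refine ⟨C (-z) * q, ?_⟩
        rw [hq]
        have hone : C (-z⁻¹) * C (-z) = (1 : Polynomial L) := by
          rw [← C_mul]
          rw [show -z⁻¹ * -z = z⁻¹ * z by ring, inv_mul_cancel₀ hzne, C_1]
        calc (X - C z) * q = (C (-z⁻¹) * C (-z)) * ((X - C z) * q) := by rw [hone]; ring
        _ = C (-z⁻¹) * (X - C z) * (C (-z) * q) := by ring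
      obtain ⟨h, hh⟩ := hUdvd
      -- coefficients of h are in the unit ball
      have hGcoeff : ∀ k, ‖(G.map ι).coeff k‖ ≤ 1 := by
        intro k
        rw [Polynomial.coeff_map]
        exact (G.coeff k).2
      have hcoeff : ∀ k, ‖h.coeff k‖ ≤ 1 := by
        intro k
        induction k with
        | zero =>
          have : (G.map ι).coeff 0 = h.coeff 0 := by
            rw [hh, Polynomial.mul_coeff_zero, hU]
            simp
          rw [← this]; exact hGcoeff 0
        | succ k ihk =>
          have hrel : (G.map ι).coeff (k+1) = h.coeff (k+1) - z⁻¹ * h.coeff k := by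
            rw [hh, hU]
            rw [sub_mul, one_mul]
            rw [Polynomial.coeff_sub]
            congr 1
            rw [mul_assoc, Polynomial.coeff_C_mul, Polynomial.coeff_X_mul]
          have : h.coeff (k+1) = (G.map ι).coeff (k+1) + z⁻¹ * h.coeff k := by
            rw [hrel]; ring
          rw [this]
          refine le_trans (IsUltrametricDist.norm_add_le_max _ _) (max_le (hGcoeff _) ?_)
          rw [norm_mul]
          calc ‖z⁻¹‖ * ‖h.coeff k‖ ≤ 1 * 1 :=
            mul_le_mul (le_of_lt hzinv) ihk (norm_nonneg _) zero_le_one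
          _ = 1 := by ring
      have hcoeffs : (↑h.coeffs : Set L) ⊆ (normRing L : Set L) := by
        intro c hc
        simp only [Finset.mem_coe, Polynomial.mem_coeffs_iff] at hc
        obtain ⟨k, _, rfl⟩ := hc
        exact hcoeff k
      set H : Polynomial (normRing L) := h.toSubring (normRing L) hcoeffs with hHdef
      have hHι : H.map ι = h := Polynomial.map_toSubring _ _ _
      have hGU : G = U₀ * H := by
        apply map_subtype_injective
        rw [Polynomial.map_mul, hHι, hUmap, ← hh]
      have hUπ : U₀.map (resHom L) = 1 := by
        rw [hU₀]
        simp only [Polynomial.map_sub, Polynomial.map_one, Polynomial.map_mul,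
          Polynomial.map_C, Polynomial.map_X]
        have : resHom L v₀ = 0 := resHom_eq_zero_iff.mpr hzinv
        rw [this, map_zero, zero_mul, sub_zero]
      have hGπ : G.map (resHom L) = H.map (resHom L) := by
        rw [hGU, Polynomial.map_mul, hUπ, one_mul]
      have hU0 : U ≠ 0 := by
        rw [hUfact]
        exact mul_ne_zero (by simp [hzne]) (X_sub_C_ne_zero z)
      have hh0 : h ≠ 0 := by
        intro hcon; rw [hcon, mul_zero] at hh; exact hGι hh
      have hdegU : U.natDegree = 1 := by
        rw [hUfact, natDegree_C_mul (by simp [hzne] : -z⁻¹ ≠ (0:L)), natDegree_X_sub_C]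
      have hdegH : (H.map ι).natDegree = n := by
        rw [hHι]
        have := natDegree_mul hU0 hh0
        rw [← hh, hdegU, hn] at this
        omega
      obtain ⟨ih1, ih2⟩ := IH H hdegH (hGπ ▸ hG)
      have hroots : (G.map ι).roots = {z} + h.roots := by
        rw [hh, Polynomial.roots_mul (hh ▸ hGι), hUfact,
          Polynomial.roots_C_mul _ (by simp [hzne] : -z⁻¹ ≠ (0:L)), roots_X_sub_C]
      have hnot1 : ¬ ‖z‖ < 1 := by linarith
      have hnot2 : ¬ ‖z‖ ≤ 1 := by linarith
      constructor
      · rw [hroots, Multiset.filter_add, Multiset.card_add, Multiset.filter_singleton,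
          if_neg hnot1, hGπ]
        rw [hHι] at ih1
        simpa using ih1
      · rw [hroots, Multiset.filter_add, Multiset.card_add, Multiset.filter_singleton,
          if_neg hnot2, hGπ]
        rw [hHι] at ih2
        simpa using ih2

end Core

section Misc

theorem finsum_rootMultiplicity {K : Type*} [Field K] (p : Polynomial K) (hp : p ≠ 0)
    (Q : K → Prop) [DecidablePred Q] :
    (∑ᶠ z ∈ {z | Q z ∧ p.eval z = 0}, rootMultiplicity z p)
      = Multiset.card (p.roots.filter Q) := by
  classical
  have hset : {z | Q z ∧ p.eval z = 0} = ↑(p.roots.toFinset.filter Q) := by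
    ext z
    simp [Polynomial.mem_roots, hp, Polynomial.IsRoot, and_comm]
  rw [hset, finsum_mem_coe_finset]
  have h1 : ∀ z ∈ p.roots.toFinset.filter Q, rootMultiplicity z p = (p.roots.filter Q).count z := by
    intro z hz
    rw [Finset.mem_filter] at hz
    rw [Multiset.count_filter, if_pos hz.2, Polynomial.count_roots]
  rw [Finset.sum_congr rfl h1]
  have h2 : p.roots.toFinset.filter Q = ((p.roots.filter Q).toFinset) ∪
      (p.roots.toFinset.filter Q \ (p.roots.filter Q).toFinset) := by
    rw [Finset.union_sdiff_of_subset]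
    intro z hz
    rw [Multiset.mem_toFinset, Multiset.mem_filter] at hz
    rw [Finset.mem_filter, Multiset.mem_toFinset]
    exact ⟨hz.1, hz.2⟩
  rw [h2, Finset.sum_union (Finset.disjoint_sdiff), Multiset.toFinset_sum_count_eq]
  have h3 : ∀ z ∈ p.roots.toFinset.filter Q \ (p.roots.filter Q).toFinset,
      (p.roots.filter Q).count z = 0 := by
    intro z hz
    rw [Finset.mem_sdiff, Multiset.mem_toFinset] at hz
    exact Multiset.count_eq_zero_of_notMem hz.2
  rw [Finset.sum_congr rfl h3]
  simp

theorem exists_mem_of_card_filter_pos {α : Type*} (s : Multiset α) (Q : α → Prop)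
    [DecidablePred Q] (h : 0 < Multiset.card (s.filter Q)) : ∃ z ∈ s, Q z := by
  rw [Multiset.card_pos_iff_exists_mem] at h
  obtain ⟨z, hz⟩ := h
  rw [Multiset.mem_filter] at hz
  exact ⟨z, hz.1, hz.2⟩

variable {L : Type*} [NormedField L]

theorem affine_image_closedBall (b v a : L) (hv : v ≠ 0) (r : ℝ) :
    (fun w => b + v * w) '' Metric.closedBall a r = Metric.closedBall (b + v * a) (‖v‖ * r) := by
  ext y
  simp only [Set.mem_image, Metric.mem_closedBall, dist_eq_norm]
  constructor
  · rintro ⟨w, hw, rfl⟩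
    have he : b + v * w - (b + v * a) = v * (w - a) := by ring
    rw [he, norm_mul]
    exact mul_le_mul_of_nonneg_left hw (norm_nonneg v)
  · intro hy
    refine ⟨a + v⁻¹ * (y - (b + v * a)), ?_, ?_⟩
    · have he : a + v⁻¹ * (y - (b + v * a)) - a = v⁻¹ * (y - (b + v * a)) := by ring
      rw [he, norm_mul, norm_inv]
      rw [inv_mul_le_iff₀ (norm_pos_iff.mpr hv)]
      exact hy
    · field_simp
      ring
  
theorem affine_image_ball (b v a : L) (hv : v ≠ 0) (r : ℝ) :
    (fun w => b + v * w) '' Metric.ball a r = Metric.ball (b + v * a) (‖v‖ * r) := by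
  ext y
  simp only [Set.mem_image, Metric.mem_ball, dist_eq_norm]
  constructor
  · rintro ⟨w, hw, rfl⟩
    have he : b + v * w - (b + v * a) = v * (w - a) := by ring
    rw [he, norm_mul]
    exact (mul_lt_mul_iff_right₀ (norm_pos_iff.mpr hv)).mpr hw
  · intro hy
    refine ⟨a + v⁻¹ * (y - (b + v * a)), ?_, ?_⟩
    · have he : a + v⁻¹ * (y - (b + v * a)) - a = v⁻¹ * (y - (b + v * a)) := by ring
      rw [he, norm_mul, norm_inv]
      rw [inv_mul_lt_iff₀ (norm_pos_iff.mpr hv)]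
      exact hy
    · field_simp
      ring

end Misc

section Gauss
variable {L : Type*} [NormedField L] [IsUltrametricDist L]

theorem coeff_norm_le_one_of_maps
    (hres1 : ∀ n m : ℕ, n ≠ m → ‖(n : L) - (m : L)‖ = 1)
    (f : Polynomial L) (hval : ∀ x : L, ‖x‖ ≤ 1 → ‖f.eval x‖ ≤ 1) :
    ∀ i, ‖f.coeff i‖ ≤ 1 := by
  classical
  by_contra hcon
  push_neg at hcon
  obtain ⟨i, hi⟩ := hcon
  have hf0 : f ≠ 0 := by
    intro h; rw [h] at hi; simp at hi; linarith
  have hisupp : i ∈ f.support := by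
    rw [Polynomial.mem_support_iff]
    intro h; rw [h] at hi; simp at hi; linarith
  obtain ⟨i₀, hi₀s, hi₀max⟩ := f.support.exists_max_image (fun j => ‖f.coeff j‖) ⟨i, hisupp⟩
  set u := f.coeff i₀ with hu
  have hmax : ∀ j, ‖f.coeff j‖ ≤ ‖u‖ := by
    intro j
    by_cases hj : j ∈ f.support
    · exact hi₀max j hj
    · rw [Polynomial.notMem_support_iff] at hj
      rw [hj, norm_zero]
      exact norm_nonneg u
  have hu1 : 1 < ‖u‖ := lt_of_lt_of_le hi (hmax i)
  have hune : u ≠ 0 := by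
    intro h; rw [h, norm_zero] at hu1; linarith
  set g : Polynomial L := Polynomial.C u⁻¹ * f with hg
  have hgcoeff : ∀ j, ‖g.coeff j‖ ≤ 1 := by
    intro j
    rw [hg, Polynomial.coeff_C_mul, norm_mul, norm_inv]
    rw [inv_mul_le_iff₀ (lt_trans zero_lt_one hu1), mul_one]
    exact hmax j
  have hgcoeffs : (↑g.coeffs : Set L) ⊆ (normRing L : Set L) := by
    intro c hc
    simp only [Finset.mem_coe, Polynomial.mem_coeffs_iff] at hc
    obtain ⟨k, _, rfl⟩ := hc
    exact hgcoeff k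
  set G : Polynomial (normRing L) := g.toSubring (normRing L) hgcoeffs with hG
  have hGι : G.map (normRing L).subtype = g := Polynomial.map_toSubring _ _ _
  have hGi₀ : ((G.coeff i₀ : normRing L) : L) = 1 := by
    have := Polynomial.coeff_toSubring g (normRing L) hgcoeffs (n := i₀)
    rw [← hG] at this
    rw [this, hg, Polynomial.coeff_C_mul, ← hu, inv_mul_cancel₀ hune]
  have hGπ : G.map (resHom L) ≠ 0 := by
    intro h
    have hc := congrArg (fun q => Polynomial.coeff q i₀) h
    simp only [Polynomial.coeff_map, Polynomial.coeff_zero] at hc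
    rw [resHom_eq_zero_iff] at hc
    rw [hGi₀] at hc
    simp at hc
  -- the residue field is infinite
  have hcast : ∀ n : ℕ, ‖(n : L)‖ ≤ 1 := by
    intro n
    rcases Nat.eq_zero_or_pos n with h | h
    · simp [h]
    · have := hres1 n 0 (Nat.pos_iff_ne_zero.mp h)
      simp only [Nat.cast_zero, sub_zero] at this
      rw [this]
  have hinj : Function.Injective (fun n : ℕ =>
      resHom L ⟨(n : L), mem_normRing_iff.mpr (hcast n)⟩) := by
    intro n m hnm
    simp only at hnm
    by_contra hne
    have hz : resHom L (⟨(n : L), mem_normRing_iff.mpr (hcast n)⟩ -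
        ⟨(m : L), mem_normRing_iff.mpr (hcast m)⟩) = 0 := by
      rw [map_sub, hnm, sub_self]
    rw [resHom_eq_zero_iff] at hz
    have hval1 : ‖(n : L) - (m : L)‖ = 1 := hres1 n m hne
    have hco : ((⟨(n : L), mem_normRing_iff.mpr (hcast n)⟩ -
        ⟨(m : L), mem_normRing_iff.mpr (hcast m)⟩ : normRing L) : L) = (n : L) - (m : L) := rfl
    rw [hco, hval1] at hz
    linarith
  haveI : Infinite (ResField L) := Infinite.of_injective _ hinj
  have hex : ∃ y : ResField L, (G.map (resHom L)).eval y ≠ 0 := by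
    by_contra hcon2
    push_neg at hcon2
    exact hGπ (Polynomial.zero_of_eval_zero _ hcon2)
  obtain ⟨y, hy⟩ := hex
  obtain ⟨x₀, rfl⟩ := resHom_surjective y
  rw [eval_map_resHom] at hy
  have hge : ¬ ‖((G.eval x₀ : normRing L) : L)‖ < 1 := by
    intro h
    exact hy (resHom_eq_zero_iff.mpr h)
  push_neg at hge
  have hgeval : ((G.eval x₀ : normRing L) : L) = g.eval (x₀ : L) := by
    rw [← eval_map_subtype, hGι]
  rw [hgeval] at hge
  have hfeval : f.eval (x₀ : L) = u * g.eval (x₀ : L) := by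
    rw [hg]
    simp only [Polynomial.eval_mul, Polynomial.eval_C]
    rw [← mul_assoc, mul_inv_cancel₀ hune, one_mul]
  have : 1 < ‖f.eval (x₀ : L)‖ := by
    rw [hfeval, norm_mul]
    calc 1 < ‖u‖ := hu1
    _ = ‖u‖ * 1 := by ring
    _ ≤ ‖u‖ * ‖g.eval (x₀ : L)‖ :=
      mul_le_mul_of_nonneg_left hge (norm_nonneg u)
  have h2 := hval (x₀ : L) x₀.2
  linarith

end Gauss

/-- **Induced action on affine partitions.** If `φ` maps the closed ball `B₀` of radius
`r₀ = ‖u₀‖` onto the closed ball `B₁` of radius `r₁ = ‖u₁‖` with degree `d`, then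
`φ` maps each class of the affine partition of `B₀` (the open balls of radius `r₀`)
onto a class of the affine partition of `B₁`, and in the affine coordinates
`x ↦ (x - aᵢ)/uᵢ` followed by reduction, this induced action is given by a polynomial
`ψ` over the residue field, with `deg ψ = d` and with local degrees of `ψ` matching
the degrees of `φ` on the corresponding classes. -/
theorem affinePartition_action {L : Type*} [NormedField L] [IsUltrametricDist L] [CompleteSpace L] [IsAlgClosed L]
    (hdense : ∀ r : ℝ, 0 < r → ∀ ε : ℝ, 0 < ε → ∃ x : L, x ≠ 0 ∧ |‖x‖ - r| < ε)
    (hres : ∀ q : ℚ, q ≠ 0 → ‖(q : L)‖ = 1)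
    (φ : Polynomial L) (a₀ a₁ : L) (r₀ r₁ : ℝ) (hr₀ : 0 < r₀) (hr₁ : 0 < r₁)
    (u₀ u₁ : L) (h₀ : ‖u₀‖ = r₀) (h₁ : ‖u₁‖ = r₁)
    (himg : (fun z => φ.eval z) '' Metric.closedBall a₀ r₀ = Metric.closedBall a₁ r₁)
    (d : ℕ) (hdeg : HasDegOn φ (Metric.closedBall a₀ r₀) (Metric.closedBall a₁ r₁) d) :
    (∀ c ∈ Metric.closedBall a₀ r₀,
      (fun z => φ.eval z) '' Metric.ball c r₀ = Metric.ball (φ.eval c) r₁) ∧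
    ∃ ψ : Polynomial (ResField L),
      ψ.natDegree = d ∧
      (∀ c ∈ Metric.closedBall a₀ r₀,
        res ((φ.eval c - a₁) / u₁) = ψ.eval (res ((c - a₀) / u₀))) ∧
      (∀ c ∈ Metric.closedBall a₀ r₀,
        HasDegOn φ (Metric.ball c r₀) (Metric.ball (φ.eval c) r₁)
          (localDeg ψ (res ((c - a₀) / u₀)))) := by
  classical
  have hu₀ : u₀ ≠ 0 := by intro h; rw [h, norm_zero] at h₀; linarith
  have hu₁ : u₁ ≠ 0 := by intro h; rw [h, norm_zero] at h₁; linarith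
  have hres1 : ∀ n m : ℕ, n ≠ m → ‖(n : L) - (m : L)‖ = 1 := by
    intro n m hnm
    have hq : ((n : ℚ) - (m : ℚ)) ≠ 0 := by
      intro h
      exact hnm (by exact_mod_cast sub_eq_zero.mp h)
    have := hres _ hq
    have h2 : ((((n:ℚ) - (m:ℚ)) : ℚ) : L) = (n : L) - (m : L) := by norm_cast
    rw [h2] at this
    exact this
  set f : Polynomial L := C u₁⁻¹ * (φ.comp (C a₀ + C u₀ * X) - C a₁) with hf
  have hfeval : ∀ x : L, f.eval x = u₁⁻¹ * (φ.eval (a₀ + u₀ * x) - a₁) := by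
    intro x
    rw [hf]
    simp [Polynomial.eval_comp]
  -- image of the unit ball under f
  have hA : (fun z => a₀ + u₀ * z) '' Metric.closedBall 0 1 = Metric.closedBall a₀ r₀ := by
    rw [affine_image_closedBall a₀ u₀ 0 hu₀ 1, mul_zero, add_zero, h₀, mul_one]
  have hB : (fun w => -(u₁⁻¹ * a₁) + u₁⁻¹ * w) '' Metric.closedBall a₁ r₁
      = Metric.closedBall 0 1 := by
    rw [affine_image_closedBall _ _ _ (inv_ne_zero hu₁) r₁, norm_inv, h₁,
      inv_mul_cancel₀ (ne_of_gt hr₁)]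
    congr 1
    ring
  have himgf : (fun z => f.eval z) '' Metric.closedBall 0 1 = Metric.closedBall 0 1 := by
    have hcompf : (fun z : L => f.eval z) = (fun w => -(u₁⁻¹ * a₁) + u₁⁻¹ * w) ∘
        (fun z => φ.eval z) ∘ (fun z => a₀ + u₀ * z) := by
      funext x
      simp only [Function.comp_apply, hfeval]
      ring
    rw [hcompf, Set.image_comp, Set.image_comp, hA, himg, hB]
  have hval : ∀ x : L, ‖x‖ ≤ 1 → ‖f.eval x‖ ≤ 1 := by
    intro x hx
    have hmem : f.eval x ∈ Metric.closedBall (0:L) 1 := by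
      rw [← himgf]
      exact ⟨x, by simpa [Metric.mem_closedBall, dist_eq_norm] using hx, rfl⟩
    simpa [Metric.mem_closedBall, dist_eq_norm] using hmem
  have hfc : ∀ i, ‖f.coeff i‖ ≤ 1 := coeff_norm_le_one_of_maps hres1 f hval
  have hfcoeffs : (↑f.coeffs : Set L) ⊆ (normRing L : Set L) := by
    intro c hc
    simp only [Finset.mem_coe, Polynomial.mem_coeffs_iff] at hc
    obtain ⟨k, _, rfl⟩ := hc
    exact hfc k
  set F : Polynomial (normRing L) := f.toSubring (normRing L) hfcoeffs with hFdef
  have hFι : F.map (normRing L).subtype = f := Polynomial.map_toSubring _ _ _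
  set ψ : Polynomial (ResField L) := F.map (resHom L) with hψdef
  -- commutation of res with evaluation
  have hcomm : ∀ x : L, ∀ hx : ‖x‖ ≤ 1, res (f.eval x) = ψ.eval (res x) := by
    intro x hx
    rw [res_eq_resHom x hx, hψdef, eval_map_resHom]
    rw [res_eq_resHom (f.eval x) (hval x hx)]
    congr 1
    apply Subtype.ext
    rw [← eval_map_subtype F ⟨x, hx⟩, hFι]
  -- localDeg transfer
  have hloc : ∀ z : L, localDeg f z = localDeg φ (a₀ + u₀ * z) := by
    intro z
    unfold localDeg
    have he : f - C (f.eval z) =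
        C u₁⁻¹ * ((φ - C (φ.eval (a₀ + u₀ * z))).comp (C a₀ + C u₀ * X)) := by
      rw [Polynomial.sub_comp, Polynomial.C_comp, hfeval, hf]
      rw [C_mul, C_sub]
      ring
    rw [he, rootMultiplicity_unit_mul (IsUnit.mk0 _ (inv_ne_zero hu₁)),
      rootMultiplicity_comp_affine (IsUnit.mk0 _ hu₀)]
  -- ψ is nonconstant
  have hres0 : res (0 : L) = 0 := by
    have h0 : ‖(0:L)‖ ≤ 1 := by simp
    rw [res_eq_resHom 0 h0]
    have : (⟨(0:L), h0⟩ : normRing L) = 0 := Subtype.ext rfl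
    rw [this, map_zero]
  have hres1' : res (1 : L) = 1 := by
    have h0 : ‖(1:L)‖ ≤ 1 := by simp
    rw [res_eq_resHom 1 h0]
    have : (⟨(1:L), h0⟩ : normRing L) = 1 := Subtype.ext rfl
    rw [this, map_one]
  have hψ1 : 1 ≤ ψ.natDegree := by
    by_contra hcon
    push_neg at hcon
    have hψ0 : ψ = C (ψ.coeff 0) := eq_C_of_natDegree_eq_zero (by omega)
    have h0m : (0:L) ∈ Metric.closedBall (0:L) 1 := by simp
    have h1m : (1:L) ∈ Metric.closedBall (0:L) 1 := by simp
    rw [← himgf] at h0m h1m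
    obtain ⟨x, hxm, hx⟩ := h0m
    obtain ⟨y, hym, hy⟩ := h1m
    rw [Metric.mem_closedBall, dist_eq_norm, sub_zero] at hxm hym
    have hx' : f.eval x = 0 := hx
    have hy' : f.eval y = 1 := hy
    have e1 : res (f.eval x) = ψ.coeff 0 := by rw [hcomm x hxm, hψ0]; simp
    have e2 : res (f.eval y) = ψ.coeff 0 := by rw [hcomm y hym, hψ0]; simp
    rw [hx', hres0] at e1
    rw [hy', hres1'] at e2
    exact zero_ne_one (e1.trans e2.symm : (0 : ResField L) = 1)
  -- transfer of preimage sums through the affine substitution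
  have hAinj : Function.Injective (fun z : L => a₀ + u₀ * z) := by
    intro a b h
    simp only at h
    exact mul_left_cancel₀ hu₀ (add_left_cancel h)
  have htrans : ∀ (SB : Set L) (t : L),
      (∑ᶠ y ∈ {y ∈ (fun z : L => a₀ + u₀ * z) '' SB | φ.eval y = a₁ + u₁ * t}, localDeg φ y)
        = ∑ᶠ z ∈ {z ∈ SB | f.eval z = t}, localDeg f z := by
    intro SB t
    have hseteq : {y ∈ (fun z : L => a₀ + u₀ * z) '' SB | φ.eval y = a₁ + u₁ * t}
        = (fun z : L => a₀ + u₀ * z) '' {z ∈ SB | f.eval z = t} := by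
      ext y
      simp only [Set.mem_setOf_eq, Set.mem_image]
      constructor
      · rintro ⟨⟨z, hz, rfl⟩, hy⟩
        refine ⟨z, ⟨hz, ?_⟩, rfl⟩
        rw [hfeval, hy]
        field_simp
        ring
      · rintro ⟨z, ⟨hz, hzt⟩, rfl⟩
        refine ⟨⟨z, hz, rfl⟩, ?_⟩
        rw [hfeval] at hzt
        rw [← hzt]
        field_simp
        ring
    rw [hseteq, finsum_mem_image hAinj.injOn]
    apply finsum_mem_congr rfl
    intro z _
    exact (hloc z).symm
  -- counting preimages in the closed unit ball
  have hcount_closed : ∀ t : L, ∀ ht : ‖t‖ ≤ 1,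
      (∑ᶠ z ∈ {z ∈ Metric.closedBall (0:L) 1 | f.eval z = t}, localDeg f z)
        = (ψ - C (res t)).natDegree := by
    intro t ht
    set t₀ : normRing L := ⟨t, ht⟩ with ht₀
    set G : Polynomial (normRing L) := F - C t₀ with hGdef
    have hGι : G.map (normRing L).subtype = f - C t := by
      rw [hGdef, Polynomial.map_sub, hFι, Polynomial.map_C]
      rfl
    have hGπ : G.map (resHom L) = ψ - C (res t) := by
      rw [hGdef, Polynomial.map_sub, Polynomial.map_C, hψdef, res_eq_resHom t ht]
    have hGπ0 : G.map (resHom L) ≠ 0 := by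
      rw [hGπ]
      intro h
      have hc2 : ψ = C (res t) := by rwa [sub_eq_zero] at h
      rw [hc2, natDegree_C] at hψ1
      omega
    obtain ⟨_, hcard⟩ := core_count G hGπ0
    have hp0 : f - C t ≠ 0 := by
      intro h
      apply hGπ0
      have : G = 0 := map_subtype_injective (by rw [hGι, h]; simp)
      rw [this, Polynomial.map_zero]
    have heq := finsum_rootMultiplicity (f - C t) hp0 (fun z => ‖z‖ ≤ 1)
    have hset : {z ∈ Metric.closedBall (0:L) 1 | f.eval z = t}
        = {z | (fun z : L => ‖z‖ ≤ 1) z ∧ (f - C t).eval z = 0} := by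
      ext z
      simp [Metric.mem_closedBall, dist_eq_norm, sub_eq_zero]
    have hfun : ∀ z ∈ {z | (fun z : L => ‖z‖ ≤ 1) z ∧ (f - C t).eval z = 0},
        localDeg f z = rootMultiplicity z (f - C t) := by
      intro z hz
      unfold localDeg
      have hz2 : f.eval z = t := by
        have := hz.2
        simp only [Polynomial.eval_sub, Polynomial.eval_C, sub_eq_zero] at this
        exact this
      rw [hz2]
    rw [hset, finsum_mem_congr rfl hfun, heq]
    rw [hGι] at hcard
    rw [hGπ] at hcard
    exact hcard
  -- counting preimages in open unit balls
  have hcount_open : ∀ c t : L, ∀ hc : ‖c‖ ≤ 1, ‖t - f.eval c‖ < 1 →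
      (∑ᶠ z ∈ {z ∈ Metric.ball c 1 | f.eval z = t}, localDeg f z)
        = localDeg ψ (res c) := by
    intro c t hc ht
    have hfcv : ‖f.eval c‖ ≤ 1 := hval c hc
    have ht1 : ‖t‖ ≤ 1 := by
      have h' := IsUltrametricDist.norm_add_le_max (t - f.eval c) (f.eval c)
      have he : t - f.eval c + f.eval c = t := by ring
      rw [he] at h'
      exact le_trans h' (max_le (le_of_lt ht) hfcv)
    set c₀ : normRing L := ⟨c, hc⟩ with hc₀
    set t₀ : normRing L := ⟨t, ht1⟩ with ht₀
    set G : Polynomial (normRing L) := F.comp (X + C c₀) - C t₀ with hGdef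
    have hGι : G.map (normRing L).subtype = f.comp (X + C c) - C t := by
      rw [hGdef, Polynomial.map_sub, Polynomial.map_comp, hFι, Polynomial.map_add,
        Polynomial.map_X, Polynomial.map_C, Polynomial.map_C]
      rfl
    have hrest : res t = ψ.eval (res c) := by
      rw [res_eq_res ht1 hfcv ht]
      exact hcomm c hc
    have hGπ : G.map (resHom L) = ψ.comp (X + C (res c)) - C (res t) := by
      rw [hGdef, Polynomial.map_sub, Polynomial.map_comp, Polynomial.map_add,
        Polynomial.map_X, Polynomial.map_C, Polynomial.map_C, hψdef, res_eq_resHom c hc,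
        res_eq_resHom t ht1]
    have hψc : ψ.comp (X + C (res c)) - C (res t)
        = (ψ - C (ψ.eval (res c))).comp (X + C (res c)) := by
      rw [Polynomial.sub_comp, Polynomial.C_comp, hrest]
    have hGπ0 : G.map (resHom L) ≠ 0 := by
      rw [hGπ, hψc]
      intro h
      have h1 : ((ψ - C (ψ.eval (res c))).comp (X + C (res c))).natDegree = 0 := by
        rw [h]; simp
      rw [Polynomial.natDegree_comp, Polynomial.natDegree_sub_C,
        Polynomial.natDegree_X_add_C, mul_one] at h1
      omega
    obtain ⟨hcard, _⟩ := core_count G hGπ0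
    have hrm : rootMultiplicity 0 (G.map (resHom L)) = localDeg ψ (res c) := by
      rw [hGπ, hψc]
      have hsh : (X + C (res c) : Polynomial (ResField L)) = C (res c) + C 1 * X := by
        rw [C_1, one_mul, add_comm]
      rw [hsh, rootMultiplicity_comp_affine isUnit_one]
      unfold localDeg
      norm_num
    have hp0 : f.comp (X + C c) - C t ≠ 0 := by
      intro h
      apply hGπ0
      have : G = 0 := map_subtype_injective (by rw [hGι, h]; simp)
      rw [this, Polynomial.map_zero]
    have heq := finsum_rootMultiplicity (f.comp (X + C c) - C t) hp0 (fun z => ‖z‖ < 1)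
    have hshiftinj : Function.Injective (fun e : L => e + c) := add_left_injective c
    have hseteq : {z ∈ Metric.ball c 1 | f.eval z = t}
        = (fun e : L => e + c) ''
            {e | (fun e : L => ‖e‖ < 1) e ∧ (f.comp (X + C c) - C t).eval e = 0} := by
      ext z
      simp only [Set.mem_setOf_eq, Set.mem_image, Metric.mem_ball, dist_eq_norm,
        Polynomial.eval_sub, Polynomial.eval_C, Polynomial.eval_comp, Polynomial.eval_add,
        Polynomial.eval_X, sub_eq_zero]
      constructor
      · rintro ⟨hz1, hz2⟩
        exact ⟨z - c, ⟨hz1, by rw [sub_add_cancel]; exact hz2⟩, by ring⟩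
      · rintro ⟨e, ⟨he1, he2⟩, rfl⟩
        exact ⟨by simpa using he1, he2⟩
    have hfun : ∀ e ∈ {e | (fun e : L => ‖e‖ < 1) e ∧ (f.comp (X + C c) - C t).eval e = 0},
        localDeg f (e + c) = rootMultiplicity e (f.comp (X + C c) - C t) := by
      intro e he
      have he2 : f.eval (e + c) = t := by
        have := he.2
        simp only [Polynomial.eval_sub, Polynomial.eval_C, Polynomial.eval_comp,
          Polynomial.eval_add, Polynomial.eval_X, sub_eq_zero] at this
        exact this
      unfold localDeg
      rw [he2]
      have hsh : (X + C c : Polynomial L) = C c + C 1 * X := by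
        rw [C_1, one_mul, add_comm]
      have hcsub : (f - C t).comp (C c + C 1 * X) = f.comp (X + C c) - C t := by
        rw [Polynomial.sub_comp, Polynomial.C_comp, hsh]
      rw [← hcsub, rootMultiplicity_comp_affine isUnit_one]
      norm_num [add_comm]
    rw [hseteq, finsum_mem_image hshiftinj.injOn,
      finsum_mem_congr rfl hfun, heq]
    rw [hGι] at hcard
    rw [hcard, hrm]
  -- every localDeg of ψ at a reduced point is positive
  have hm1 : ∀ x : ResField L, 1 ≤ localDeg ψ x := by
    intro x
    unfold localDeg
    have hne : ψ - C (ψ.eval x) ≠ 0 := by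
      intro h
      have hc2 : ψ = C (ψ.eval x) := by rwa [sub_eq_zero] at h
      rw [hc2, natDegree_C] at hψ1
      omega
    have := (Polynomial.rootMultiplicity_pos hne (x := x)).mpr (by simp [Polynomial.IsRoot])
    omega
  -- f maps open unit balls onto open unit balls
  have hfball : ∀ c : L, ‖c‖ ≤ 1 →
      (fun z => f.eval z) '' Metric.ball c 1 = Metric.ball (f.eval c) 1 := by
    intro c hc
    apply Set.Subset.antisymm
    · rintro y ⟨x, hx, rfl⟩
      rw [Metric.mem_ball, dist_eq_norm] at hx ⊢
      set c₀ : normRing L := ⟨c, hc⟩ with hc₀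
      have hev : (normRing L).subtype (F.eval c₀) = f.eval c := by
        have h1 := eval_map_subtype F c₀
        rw [hFι] at h1
        exact h1.symm
      set G : Polynomial (normRing L) := F.comp (X + C c₀) - C (F.eval c₀) with hGdef
      have hGι : G.map (normRing L).subtype = f.comp (X + C c) - C (f.eval c) := by
        rw [hGdef, Polynomial.map_sub, Polynomial.map_comp, hFι, Polynomial.map_add,
          Polynomial.map_X, Polynomial.map_C, Polynomial.map_C, hev]
        rfl
      have hroot : G.eval 0 = 0 := by
        rw [hGdef]
        simp [Polynomial.eval_comp]
      obtain ⟨H, hH⟩ := Polynomial.dvd_iff_isRoot.mpr hroot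
      have hfx : f.eval x - f.eval c = (x - c) * (H.map (normRing L).subtype).eval (x - c) := by
        have h2 : (G.map (normRing L).subtype).eval (x - c) = f.eval x - f.eval c := by
          rw [hGι]
          simp only [Polynomial.eval_sub, Polynomial.eval_C, Polynomial.eval_comp,
            Polynomial.eval_add, Polynomial.eval_X]
          have he3 : x - c + c = x := by ring
          rw [he3]
        rw [← h2, hH, Polynomial.map_mul, Polynomial.map_sub, Polynomial.map_X,
          Polynomial.map_C]
        simp [Polynomial.eval_mul]
      rw [hfx, norm_mul]
      have hHev : ‖(H.map (normRing L).subtype).eval (x - c)‖ ≤ 1 := by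
        have h3 := eval_map_subtype H ⟨x - c, le_of_lt hx⟩
        rw [show ((⟨x - c, le_of_lt hx⟩ : normRing L) : L) = x - c from rfl] at h3
        rw [h3]
        exact (H.eval _).2
      calc ‖x - c‖ * ‖(H.map (normRing L).subtype).eval (x - c)‖
          ≤ ‖x - c‖ * 1 := mul_le_mul_of_nonneg_left hHev (norm_nonneg _)
      _ = ‖x - c‖ := mul_one _
      _ < 1 := hx
    · intro y hy
      rw [Metric.mem_ball, dist_eq_norm] at hy
      have hsum := hcount_open c y hc hy
      by_contra hnot
      have hempty : {z ∈ Metric.ball c 1 | f.eval z = y} = ∅ := by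
        ext z
        simp only [Set.mem_setOf_eq, Set.mem_empty_iff_false, iff_false, not_and]
        intro hz1 hz2
        exact hnot ⟨z, hz1, hz2⟩
      rw [hempty] at hsum
      simp only [finsum_mem_empty] at hsum
      have := hm1 (res c)
      omega
  -- normalization of points of the source ball
  have hnorm : ∀ c, c ∈ Metric.closedBall a₀ r₀ →
      ∃ c' : L, ‖c'‖ ≤ 1 ∧ c = a₀ + u₀ * c' ∧ (c - a₀) / u₀ = c' := by
    intro c hcm
    refine ⟨(c - a₀) / u₀, ?_, by field_simp; ring, rfl⟩
    rw [Metric.mem_closedBall, dist_eq_norm] at hcm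
    rw [norm_div, h₀, div_le_one hr₀]
    exact hcm
  -- first conclusion
  have goal1 : ∀ c ∈ Metric.closedBall a₀ r₀,
      (fun z => φ.eval z) '' Metric.ball c r₀ = Metric.ball (φ.eval c) r₁ := by
    intro c hcm
    obtain ⟨c', hc', hcr, _⟩ := hnorm c hcm
    have hball : Metric.ball c r₀ = (fun z : L => a₀ + u₀ * z) '' Metric.ball c' 1 := by
      rw [affine_image_ball a₀ u₀ c' hu₀ 1, h₀, mul_one, ← hcr]
    have hphiA : ∀ z : L, φ.eval (a₀ + u₀ * z) = a₁ + u₁ * f.eval z := by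
      intro z
      rw [hfeval]
      field_simp
      ring
    rw [hball]
    have hcompim : (fun z => φ.eval z) '' ((fun z : L => a₀ + u₀ * z) '' Metric.ball c' 1)
        = (fun w : L => a₁ + u₁ * w) '' ((fun z => f.eval z) '' Metric.ball c' 1) := by
      rw [← Set.image_comp, ← Set.image_comp]
      apply Set.image_congr
      intro z _
      simp only [Function.comp_apply]
      exact hphiA z
    rw [hcompim, hfball c' hc', affine_image_ball a₁ u₁ (f.eval c') hu₁ 1, h₁, mul_one]
    have hcen : a₁ + u₁ * f.eval c' = φ.eval c := by
      rw [hcr, hphiA c']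
    rw [hcen]
  -- degree of ψ
  have hψd : ψ.natDegree = d := by
    have h1 := hcount_closed 0 (by simp)
    rw [hres0, Polynomial.C_0, sub_zero] at h1
    have hw : a₁ + u₁ * 0 ∈ Metric.closedBall a₁ r₁ := by
      simp only [Metric.mem_closedBall, dist_eq_norm, mul_zero, add_zero, sub_self, norm_zero]
      linarith
    have h2 := hdeg.2 _ hw
    have h3 := htrans (Metric.closedBall (0:L) 1) 0
    rw [hA] at h3
    rw [← h1, ← h3]
    exact h2
  -- second conclusion : compatibility of reductions
  have goal2 : ∀ c ∈ Metric.closedBall a₀ r₀,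
      res ((φ.eval c - a₁) / u₁) = ψ.eval (res ((c - a₀) / u₀)) := by
    intro c hcm
    obtain ⟨c', hc', hcr, hcr2⟩ := hnorm c hcm
    rw [hcr2]
    have hdiv : (φ.eval c - a₁) / u₁ = f.eval c' := by
      rw [hfeval, ← hcr]
      field_simp
    rw [hdiv]
    exact hcomm c' hc'
  -- third conclusion : degrees on the open balls
  have goal3 : ∀ c ∈ Metric.closedBall a₀ r₀,
      HasDegOn φ (Metric.ball c r₀) (Metric.ball (φ.eval c) r₁)
        (localDeg ψ (res ((c - a₀) / u₀))) := by
    intro c hcm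
    obtain ⟨c', hc', hcr, hcr2⟩ := hnorm c hcm
    rw [hcr2]
    refine ⟨hm1 (res c'), ?_⟩
    intro w hw
    rw [Metric.mem_ball, dist_eq_norm] at hw
    set t : L := u₁⁻¹ * (w - a₁) with htdef
    have hwt : w = a₁ + u₁ * t := by
      rw [htdef]
      field_simp
      ring
    have htc : ‖t - f.eval c'‖ < 1 := by
      have he : t - f.eval c' = u₁⁻¹ * (w - φ.eval c) := by
        rw [htdef, hfeval, ← hcr]
        ring
      rw [he, norm_mul, norm_inv, h₁, inv_mul_lt_iff₀ hr₁, mul_one]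
      exact hw
    have hball : Metric.ball c r₀ = (fun z : L => a₀ + u₀ * z) '' Metric.ball c' 1 := by
      rw [affine_image_ball a₀ u₀ c' hu₀ 1, h₀, mul_one, ← hcr]
    rw [hball, hwt, htrans (Metric.ball c' 1) t]
    exact hcount_open c' t hc' htc
  exact ⟨goal1, ψ, hψd, goal2, goal3⟩
end

section
/- If every infraconnected component of the filled Julia set K(φ) of a polynomial φ ∈ L[ζ] is a singleton, then every periodic cycle of φ is repelling, i.e. for every periodic point ζ₀ of period p one has |(φ^p)′(ζ₀)| > 1. -/
open Polynomial Metric Set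

lemma polyIter_eval {L : Type*} [CommRing L] (φ : Polynomial L) (p : ℕ) (z : L) :
    (polyIter φ p).eval z = (fun w => φ.eval w)^[p] z := by
  induction p with
  | zero => simp [polyIter]
  | succ n ih => rw [polyIter, eval_comp, ih, Function.iterate_succ_apply']

lemma poly_bound {L : Type*} [NormedField L] (f : Polynomial L) (R : ℝ) :
    ∃ C : ℝ, ∀ z : L, ‖z‖ ≤ R → ‖f.eval z‖ ≤ C := by
  refine ⟨(∑ i ∈ Finset.range (f.natDegree + 1), ‖f.coeff i‖) * (max 1 R) ^ f.natDegree, ?_⟩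
  intro z hz
  rw [eval_eq_sum_range]
  refine (norm_sum_le _ _).trans ?_
  rw [Finset.sum_mul]
  refine Finset.sum_le_sum fun i hi => ?_
  rw [norm_mul, norm_pow]
  have h1 : (1 : ℝ) ≤ max 1 R := le_max_left _ _
  have h2 : ‖z‖ ^ i ≤ max 1 R ^ f.natDegree := by
    calc ‖z‖ ^ i ≤ max 1 R ^ i :=
          pow_le_pow_left₀ (norm_nonneg z) (hz.trans (le_max_right _ _)) i
      _ ≤ max 1 R ^ f.natDegree :=
          pow_le_pow_right₀ h1 (by simpa using Nat.lt_succ_iff.mp (Finset.mem_range.mp hi))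
  exact mul_le_mul_of_nonneg_left h2 (norm_nonneg _)

lemma ultra_norm_add_ge {L : Type*} [NormedField L] [IsUltrametricDist L]
    (u t : L) (h : ‖u‖ < ‖t‖) : ‖t‖ ≤ ‖u + t‖ := by
  by_contra hc
  push_neg at hc
  have h2 : ‖t‖ ≤ max ‖u + t‖ ‖u‖ := by
    have h3 := IsUltrametricDist.norm_add_le_max (u + t) (-u)
    have h4 : u + t + -u = t := by ring
    rw [h4, norm_neg] at h3
    exact h3
  rcases le_max_iff.mp h2 with h1 | h1 <;> linarith

lemma infra_closedBall {L : Type*} [NormedField L] [IsUltrametricDist L]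
    (hdense : ∀ r : ℝ, 0 < r → ∀ ε : ℝ, 0 < ε → ∃ x : L, x ≠ 0 ∧ |‖x‖ - r| < ε)
    (a : L) (s : ℝ) (hs : 0 < s) : Infraconnected (Metric.closedBall a s) := by
  intro a₀ r₀ a₁ r₁ _ hcov
  by_contra hc
  push_neg at hc
  obtain ⟨h0, h1⟩ := hc
  rw [Set.not_subset] at h0 h1
  obtain ⟨x₀, hx₀B, hx₀0⟩ := h0
  obtain ⟨x₁, hx₁B, hx₁1⟩ := h1
  have hx₀1 : x₀ ∈ Metric.closedBall a₁ r₁ := (hcov hx₀B).resolve_left hx₀0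
  have hx₁0 : x₁ ∈ Metric.closedBall a₀ r₀ := (hcov hx₁B).resolve_right hx₁1
  simp only [Metric.mem_closedBall, not_le] at hx₀B hx₁B hx₀0 hx₁1 hx₀1 hx₁0
  have hr₁0 : 0 ≤ r₁ := (dist_nonneg).trans hx₀1
  have hr₀0 : 0 ≤ r₀ := (dist_nonneg).trans hx₁0
  have hd01 : dist x₀ x₁ ≤ s :=
    (IsUltrametricDist.dist_triangle_max x₀ a x₁).trans
      (max_le hx₀B (by rw [dist_comm]; exact hx₁B))
  have hr₁s : r₁ < s := by
    by_contra hsr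
    push_neg at hsr
    have h2 : dist x₁ a₁ ≤ r₁ :=
      (IsUltrametricDist.dist_triangle_max x₁ x₀ a₁).trans
        (max_le (by rw [dist_comm]; exact hd01.trans hsr) hx₀1)
    linarith
  have hr₀s : r₀ < s := by
    by_contra hsr
    push_neg at hsr
    have h2 : dist x₀ a₀ ≤ r₀ :=
      (IsUltrametricDist.dist_triangle_max x₀ x₁ a₀).trans
        (max_le (hd01.trans hsr) hx₁0)
    linarith
  have hcs : dist x₀ a₀ ≤ s :=
    (IsUltrametricDist.dist_triangle_max x₀ x₁ a₀).trans
      (max_le hd01 (hx₁0.trans hr₀s.le))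
  set c := dist x₀ a₀ with hcdef
  set m := max r₀ r₁ with hmdef
  have hm0 : 0 ≤ m := le_max_of_le_left hr₀0
  have hms : m < s := max_lt hr₀s hr₁s
  set δ := s - m with hδdef
  have hδ : 0 < δ := by simp [hδdef]; linarith
  obtain ⟨t₁, ht₁0, ht₁⟩ := hdense (m + δ/2) (by linarith) (δ/4) (by linarith)
  obtain ⟨t₂, ht₂0, ht₂⟩ := hdense (m + δ/8) (by linarith) (δ/16) (by linarith)
  rw [abs_lt] at ht₁ ht₂
  have key : ∃ t : L, m < ‖t‖ ∧ ‖t‖ ≤ s ∧ ‖t‖ ≠ c := by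
    by_cases h : ‖t₁‖ = c
    · exact ⟨t₂, by linarith [ht₂.1, ht₂.2], by linarith [ht₂.2], by rw [← h]; intro he; linarith [ht₁.1, ht₂.2]⟩
    · exact ⟨t₁, by linarith [ht₁.1], by linarith [ht₁.2], h⟩
  obtain ⟨t, htm, hts, htc⟩ := key
  set w := x₀ + t with hwdef
  have hwx₀ : dist w x₀ = ‖t‖ := by
    rw [dist_eq_norm]; congr 1; ring
  have hwB : w ∈ Metric.closedBall a s := by
    rw [Metric.mem_closedBall]
    exact (IsUltrametricDist.dist_triangle_max w x₀ a).trans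
      (max_le (hwx₀.le.trans hts) hx₀B)
  have hw1 : w ∉ Metric.closedBall a₁ r₁ := by
    rw [Metric.mem_closedBall, not_le]
    have h1 : ‖x₀ - a₁‖ < ‖t‖ := by
      rw [← dist_eq_norm]
      exact lt_of_le_of_lt hx₀1 (lt_of_le_of_lt (le_max_right r₀ r₁) htm)
    have h2 : ‖t‖ ≤ ‖(x₀ - a₁) + t‖ := ultra_norm_add_ge _ _ h1
    have h3 : w - a₁ = (x₀ - a₁) + t := by ring
    rw [dist_eq_norm, h3]
    calc r₁ ≤ m := le_max_right r₀ r₁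
      _ < ‖t‖ := htm
      _ ≤ _ := h2
  have hw0 : w ∉ Metric.closedBall a₀ r₀ := by
    rw [Metric.mem_closedBall, not_le]
    have h3 : w - a₀ = (x₀ - a₀) + t := by ring
    rw [dist_eq_norm, h3]
    have hu : ‖x₀ - a₀‖ = c := by rw [← dist_eq_norm]
    rcases lt_or_gt_of_ne htc with hlt | hgt
    · have h2 : ‖x₀ - a₀‖ ≤ ‖t + (x₀ - a₀)‖ := ultra_norm_add_ge t _ (by rw [hu]; exact hlt)
      rw [add_comm] at h2
      rw [hu] at h2
      exact lt_of_lt_of_le hx₀0 h2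
    · have h1 : ‖x₀ - a₀‖ < ‖t‖ := by rw [hu]; exact hgt
      have h2 : ‖t‖ ≤ ‖(x₀ - a₀) + t‖ := ultra_norm_add_ge _ _ h1
      calc r₀ < c := hx₀0
        _ < ‖t‖ := hgt
        _ ≤ _ := h2
  rcases hcov hwB with h | h
  · exact hw0 h
  · exact hw1 h



/-- **Trivial components force repelling cycles.** If every infraconnected component of
`K(φ)` is a singleton, then every cycle of `φ` is repelling:
`|(φ^p)′(ζ₀)| > 1` for every periodic point `ζ₀` of period `p`. -/
theorem singleton_infraComponents_repelling {L : Type*} [NormedField L] [IsUltrametricDist L] [CompleteSpace L] [IsAlgClosed L]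
    (hdense : ∀ r : ℝ, 0 < r → ∀ ε : ℝ, 0 < ε → ∃ x : L, x ≠ 0 ∧ |‖x‖ - r| < ε)
    (hres : ∀ q : ℚ, q ≠ 0 → ‖(q : L)‖ = 1)
    (φ : Polynomial L) (hd : 2 ≤ φ.natDegree)
    (hsing : ∀ z ∈ filledJulia φ, ∀ w ∈ filledJulia φ,
      ∀ S ⊆ filledJulia φ, Infraconnected S → z ∈ S → w ∈ S → z = w) :
    ∀ (ζ₀ : L) (p : ℕ), 0 < p → (fun w => φ.eval w)^[p] ζ₀ = ζ₀ →
      1 < ‖(Polynomial.derivative (polyIter φ p)).eval ζ₀‖ := by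
  intro ζ₀ p hp hfix
  by_contra hle
  push_neg at hle
  set ψ := polyIter φ p with hψdef
  have hψζ : ψ.eval ζ₀ = ζ₀ := by rw [hψdef, polyIter_eval]; exact hfix
  set q : Polynomial L := ψ.comp (X + C ζ₀) - C ζ₀ with hqdef
  have hqeval : ∀ t : L, q.eval t = ψ.eval (t + ζ₀) - ζ₀ := by
    intro t; simp [hqdef, eval_comp]
  have hq0 : q.coeff 0 = 0 := by
    rw [coeff_zero_eq_eval_zero, hqeval]
    simp [hψζ]
  have hq1 : ‖q.coeff 1‖ ≤ 1 := by
    have h1 : q.coeff 1 = (derivative q).eval 0 := by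
      rw [← coeff_zero_eq_eval_zero]
      simp [coeff_derivative]
    have h2 : (derivative q).eval 0 = (derivative ψ).eval ζ₀ := by
      simp [hqdef, derivative_comp, eval_comp]
    rw [h1, h2]
    exact hle
  set M : ℝ := 1 + ∑ i ∈ Finset.range (q.natDegree + 1), ‖q.coeff i‖ with hMdef
  have hsum0 : 0 ≤ ∑ i ∈ Finset.range (q.natDegree + 1), ‖q.coeff i‖ :=
    Finset.sum_nonneg fun i _ => norm_nonneg _
  have hM1 : 1 ≤ M := by rw [hMdef]; linarith
  have hM0 : 0 < M := by linarith
  have hMc : ∀ i : ℕ, ‖q.coeff i‖ ≤ M := by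
    intro i
    by_cases hi : i < q.natDegree + 1
    · have := Finset.single_le_sum (f := fun j => ‖q.coeff j‖)
        (fun j _ => norm_nonneg _) (Finset.mem_range.mpr hi)
      rw [hMdef]; linarith
    · push_neg at hi
      rw [coeff_eq_zero_of_natDegree_lt (by omega)]
      simp
      linarith
  set s : ℝ := M⁻¹ with hsdef
  have hs : 0 < s := by rw [hsdef]; positivity
  have hs1 : s ≤ 1 := by rw [hsdef]; exact inv_le_one_of_one_le₀ hM1
  have key : ∀ t : L, ‖t‖ ≤ s → ‖q.eval t‖ ≤ s := by
    intro t ht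
    rw [eval_eq_sum_range]
    refine IsUltrametricDist.norm_sum_le_of_forall_le_of_nonneg hs.le ?_
    intro i _
    rw [norm_mul, norm_pow]
    match i with
    | 0 => rw [hq0]; simp [hs.le]
    | 1 =>
      calc ‖q.coeff 1‖ * ‖t‖ ^ 1 ≤ 1 * s ^ 1 :=
            mul_le_mul hq1 (pow_le_pow_left₀ (norm_nonneg t) ht 1)
              (pow_nonneg (norm_nonneg t) 1) zero_le_one
        _ = s := by ring
    | (n + 2) =>
      have hts : ‖t‖ ^ (n + 2) ≤ s ^ 2 := by
        calc ‖t‖ ^ (n + 2) ≤ s ^ (n + 2) :=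
              pow_le_pow_left₀ (norm_nonneg t) ht _
          _ ≤ s ^ 2 := pow_le_pow_of_le_one hs.le hs1 (by omega)
      calc ‖q.coeff (n + 2)‖ * ‖t‖ ^ (n + 2) ≤ M * s ^ 2 :=
            mul_le_mul (hMc _) hts (pow_nonneg (norm_nonneg t) _) hM0.le
        _ = s := by
            rw [hsdef, sq, ← mul_assoc, mul_inv_cancel₀ (ne_of_gt hM0), one_mul]
  have hmap : ∀ z ∈ Metric.closedBall ζ₀ s, ψ.eval z ∈ Metric.closedBall ζ₀ s := by
    intro z hz
    rw [Metric.mem_closedBall, dist_eq_norm]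
    have h1 : ψ.eval z - ζ₀ = q.eval (z - ζ₀) := by
      rw [hqeval, sub_add_cancel]
    rw [h1]
    refine key _ ?_
    rw [← dist_eq_norm]
    exact Metric.mem_closedBall.mp hz
  have hball_julia : Metric.closedBall ζ₀ s ⊆ filledJulia φ := by
    intro z hz
    choose Cr hCr using fun r : ℕ => poly_bound (polyIter φ r) (‖ζ₀‖ + s)
    set Cm : ℝ := ∑ r ∈ Finset.range p, max 0 (Cr r) with hCmdef
    have hCmle : ∀ r ∈ Finset.range p, Cr r ≤ Cm := by
      intro r hr
      calc Cr r ≤ max 0 (Cr r) := le_max_right _ _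
        _ ≤ Cm := Finset.single_le_sum (f := fun j => max 0 (Cr j))
              (fun j _ => le_max_left _ _) hr
    have hiter : ∀ j : ℕ, (fun w => φ.eval w)^[p * j] z ∈ Metric.closedBall ζ₀ s := by
      intro j
      induction j with
      | zero => simpa using hz
      | succ k ih =>
        have heq : (fun w => φ.eval w)^[p * (k + 1)] z
            = (fun w => φ.eval w)^[p] ((fun w => φ.eval w)^[p * k] z) := by
          rw [← Function.iterate_add_apply]
          congr 1
          ring
        rw [heq, ← polyIter_eval, ← hψdef]
        exact hmap _ ih
    have horb : ∀ n : ℕ, ‖(fun w => φ.eval w)^[n] z‖ ≤ Cm := by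
      intro n
      have hn : (fun w => φ.eval w)^[n] z
          = (fun w => φ.eval w)^[n % p] ((fun w => φ.eval w)^[p * (n / p)] z) := by
        rw [← Function.iterate_add_apply, Nat.mod_add_div]
      set u := (fun w => φ.eval w)^[p * (n / p)] z with hudef
      have hu : ‖u‖ ≤ ‖ζ₀‖ + s := by
        have h1 : dist u ζ₀ ≤ s := Metric.mem_closedBall.mp (hiter (n / p))
        rw [dist_eq_norm] at h1
        calc ‖u‖ = ‖ζ₀ + (u - ζ₀)‖ := by congr 1; ring
          _ ≤ ‖ζ₀‖ + ‖u - ζ₀‖ := norm_add_le _ _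
          _ ≤ ‖ζ₀‖ + s := by linarith
      rw [hn, ← polyIter_eval]
      exact (hCr (n % p) u hu).trans (hCmle _ (Finset.mem_range.mpr (Nat.mod_lt n hp)))
    intro htend
    obtain ⟨n, hn⟩ := (htend.eventually_ge_atTop (Cm + 1)).exists
    linarith [horb n]
  obtain ⟨x, hx0, hxs⟩ := hdense (s / 2) (by linarith) (s / 2) (by linarith)
  rw [abs_lt] at hxs
  have hxle : ‖x‖ ≤ s := by linarith [hxs.2]
  have hmem : ζ₀ + x ∈ Metric.closedBall ζ₀ s := by
    rw [Metric.mem_closedBall, dist_eq_norm]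
    have : ζ₀ + x - ζ₀ = x := by ring
    rw [this]
    exact hxle
  have hself : ζ₀ ∈ Metric.closedBall ζ₀ s := Metric.mem_closedBall_self hs.le
  have heq := hsing ζ₀ (hball_julia hself) (ζ₀ + x) (hball_julia hmem)
    (Metric.closedBall ζ₀ s) hball_julia (infra_closedBall hdense ζ₀ s hs) hself hmem
  apply hx0
  have h := heq.symm
  rwa [add_eq_left] at h
end
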